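/- arXiv:1408.6096 — 8 statements merged into one kernel-verified Lean document; each statement's English description precedes it below -/
import Mathlib

section
/- Let G be a group and (G_n)_{n∈ℕ} a decreasing sequence of finite-index subgroups of G (i.e. G_{n+1} ≤ G_n for all n). Then the following three conditions are equivalent: (1) for every nontrivial element g ∈ G there exists n such that G_n ∩ {k g k⁻¹ h : k ∈ G, h ∈ G_n} = ∅; (2) ⋂_{n∈ℕ} ⋃_{k∈G} k G_n k⁻¹ = {1}; (3) for every finite subset F ⊆ G there exists n such that for every k ∈ G the map sending f ∈ F to the left coset (f·k)·G_n is injective on F. -/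
/-- Lemma 2.5 of Szabó–Wu–Zacharias: equivalent characterizations of a
semi-conjugacy-separating decreasing sequence of finite-index subgroups. -/
theorem stmt_0 {G : Type*} [Group G] (Gn : ℕ → Subgroup G)
    (hdec : ∀ n, Gn (n + 1) ≤ Gn n) (hfi : ∀ n, (Gn n).FiniteIndex) :
    List.TFAE
      [∀ g : G, g ≠ 1 → ∃ n, (Gn n : Set G) ∩
          {x : G | ∃ k : G, ∃ h ∈ Gn n, x = k * g * k⁻¹ * h} = ∅,
       (⋂ n, ⋃ k : G, (fun x => k * x * k⁻¹) '' (Gn n : Set G)) = {1},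
       ∀ F : Finset G, ∃ n, ∀ k : G,
          Set.InjOn (fun f : G => (QuotientGroup.mk (f * k) : G ⧸ Gn n)) ↑F] := by
  have hanti : Antitone Gn := antitone_nat_of_succ_le hdec
  tfae_have 1 → 3
  · intro H1 F
    -- extract the cleaner form of condition 1
    have key : ∀ g : G, g ≠ 1 → ∃ n, ∀ k : G, k * g * k⁻¹ ∉ Gn n := by
      intro g hg
      obtain ⟨n, hn⟩ := H1 g hg
      refine ⟨n, fun k hk => ?_⟩
      have hmem : (k * g * k⁻¹ : G) ∈ (Gn n : Set G) ∩
          {x : G | ∃ k : G, ∃ h ∈ Gn n, x = k * g * k⁻¹ * h} :=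
        ⟨hk, k, 1, (Gn n).one_mem, (mul_one _).symm⟩
      rw [hn] at hmem
      exact hmem
    classical
    set nfun : G → ℕ := fun g => if h : g ≠ 1 then (key g h).choose else 0 with hnfun
    refine ⟨F.sup fun f => F.sup fun f' => nfun (f⁻¹ * f'), fun k f hf f' hf' heq => ?_⟩
    by_contra hne
    have hg : (f⁻¹ * f' : G) ≠ 1 := by
      intro h
      exact hne (by rw [← mul_one f, ← h]; group)
    have hmem : k⁻¹ * (f⁻¹ * f') * k⁻¹⁻¹ ∈
        Gn (F.sup fun f => F.sup fun f' => nfun (f⁻¹ * f')) := by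
      have := (QuotientGroup.eq (s := Gn (F.sup fun f => F.sup fun f' => nfun (f⁻¹ * f')))).1 heq
      convert this using 1
      group
    have hle : nfun (f⁻¹ * f') ≤ F.sup fun f => F.sup fun f' => nfun (f⁻¹ * f') :=
      le_trans (Finset.le_sup (f := fun f' => nfun (f⁻¹ * f')) hf')
        (Finset.le_sup (f := fun f => F.sup fun f' => nfun (f⁻¹ * f')) hf)
    have : k⁻¹ * (f⁻¹ * f') * k⁻¹⁻¹ ∈ Gn (nfun (f⁻¹ * f')) := hanti hle hmem
    have hch := (key _ hg).choose_spec k⁻¹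
    rw [hnfun] at this
    simp only [dif_pos hg] at this
    exact hch this
  tfae_have 3 → 2
  · intro H3
    classical
    apply Set.eq_singleton_iff_unique_mem.2
    constructor
    · exact Set.mem_iInter.2 fun n => Set.mem_iUnion.2
        ⟨1, 1, (Gn n).one_mem, by group⟩
    · intro g hg
      by_contra hne
      obtain ⟨n, hn⟩ := H3 ({1, g} : Finset G)
      obtain ⟨k, x, hx, hxe⟩ := Set.mem_iUnion.1 (Set.mem_iInter.1 hg n)
      have hcos : (QuotientGroup.mk (g * k) : G ⧸ Gn n) = QuotientGroup.mk (1 * k) := by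
        rw [QuotientGroup.eq]
        have : (g * k)⁻¹ * (1 * k) = x⁻¹ := by
          rw [← hxe]; group
        rw [this]
        exact (Gn n).inv_mem hx
      have := hn k (by simp) (by simp) hcos
      exact hne this
  tfae_have 2 → 1
  · intro H2 g hg
    have : g ∉ (⋂ n, ⋃ k : G, (fun x => k * x * k⁻¹) '' (Gn n : Set G)) := by
      rw [H2]; simpa using hg
    obtain ⟨n, hn⟩ := not_forall.1 (fun h => this (Set.mem_iInter.2 h))
    refine ⟨n, Set.eq_empty_iff_forall_notMem.2 ?_⟩
    rintro x ⟨hx, k, h, hh, hxe⟩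
    apply hn
    refine Set.mem_iUnion.2 ⟨k⁻¹, x * h⁻¹, (Gn n).mul_mem hx ((Gn n).inv_mem hh), ?_⟩
    simp only []
    rw [hxe]; group
  tfae_finish
end

section
/- Let (X,d) be a metric space and H a group acting on X such that for every h ∈ H the map x ↦ h•x is an isometry. For x, y ∈ X define the quotient pseudometric between orbits by ρ(x,y) = inf{ d(h₁•x, h₂•y) : h₁, h₂ ∈ H }. Let x ∈ X and R > 0, and assume the orbit map is injective on the open ball B_{3R}(x): whenever x₁, x₂ ∈ B_{3R}(x) and h•x₁ = x₂ for some h ∈ H, then x₁ = x₂. Then: (i) ρ(x₁,x₂) = d(x₁,x₂) for all x₁, x₂ in the open ball B_R(x); and (ii) for every y ∈ X with ρ(x,y) < R there exists h ∈ H and x' ∈ B_R(x) with h•y = x'. In other words, the orbit-space projection restricted to B_R(x) is an isometry onto the ball of radius R around the orbit of x. -/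
/-- Lemma on injectivity radius vs. isometry radius: if the orbit projection of an
isometric group action is injective on `B_{3R}(x)`, then on `B_R(x)` the quotient
pseudometric agrees with the metric, and the projection maps `B_R(x)` onto the
ball of radius `R` around the orbit of `x`. -/
theorem stmt_3 {X : Type*} [MetricSpace X] {H : Type*} [Group H] [MulAction H X]
    (hiso : ∀ h : H, Isometry (fun x : X => h • x))
    (x : X) (R : ℝ) (hR : 0 < R)
    (hinj : ∀ x₁ ∈ Metric.ball x (3 * R), ∀ x₂ ∈ Metric.ball x (3 * R),
      (∃ h : H, h • x₁ = x₂) → x₁ = x₂) :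
    (∀ x₁ ∈ Metric.ball x R, ∀ x₂ ∈ Metric.ball x R,
      sInf {r : ℝ | ∃ h₁ h₂ : H, r = dist (h₁ • x₁) (h₂ • x₂)} = dist x₁ x₂) ∧
    (∀ y : X, sInf {r : ℝ | ∃ h₁ h₂ : H, r = dist (h₁ • x) (h₂ • y)} < R →
      ∃ h : H, ∃ x' ∈ Metric.ball x R, h • y = x') := by
  constructor
  · intro x₁ hx₁ x₂ hx₂
    apply le_antisymm
    · apply csInf_le
      · refine ⟨0, ?_⟩
        rintro r ⟨h₁, h₂, rfl⟩
        positivity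
      · exact ⟨1, 1, by simp⟩
    · refine le_csInf ⟨dist x₁ x₂, 1, 1, by simp⟩ ?_
      rintro r ⟨h₁, h₂, rfl⟩
      have key : dist (h₁ • x₁) (h₂ • x₂) = dist x₁ ((h₁⁻¹ * h₂) • x₂) := by
        rw [← (hiso h₁⁻¹).dist_eq]
        simp [smul_smul]
      rw [key]
      by_contra hlt
      push_neg at hlt
      set g := h₁⁻¹ * h₂ with hg
      have hd12 : dist x₁ x₂ < 2 * R := by
        rw [Metric.mem_ball] at hx₁ hx₂
        have h3 := dist_triangle x₁ x x₂
        rw [dist_comm x x₂] at h3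
        linarith
      have hgx₂ : g • x₂ ∈ Metric.ball x (3 * R) := by
        rw [Metric.mem_ball]
        rw [Metric.mem_ball] at hx₁
        calc dist (g • x₂) x ≤ dist (g • x₂) x₁ + dist x₁ x := dist_triangle _ _ _
        _ < dist x₁ x₂ + R := by rw [dist_comm]; linarith
        _ < 3 * R := by linarith
      have hx₂' : x₂ ∈ Metric.ball x (3 * R) := Metric.ball_subset_ball (by linarith) hx₂
      have heq := hinj x₂ hx₂' (g • x₂) hgx₂ ⟨g, rfl⟩
      rw [← heq] at hlt
      linarith
  · intro y hy
    have hne : {r : ℝ | ∃ h₁ h₂ : H, r = dist (h₁ • x) (h₂ • y)}.Nonempty := ⟨_, 1, 1, rfl⟩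
    obtain ⟨r, ⟨h₁, h₂, rfl⟩, hrR⟩ := exists_lt_of_csInf_lt hne hy
    refine ⟨h₁⁻¹ * h₂, (h₁⁻¹ * h₂) • y, ?_, rfl⟩
    rw [Metric.mem_ball, dist_comm]
    have key : dist (h₁ • x) (h₂ • y) = dist x ((h₁⁻¹ * h₂) • y) := by
      rw [← (hiso h₁⁻¹).dist_eq]
      simp [smul_smul]
    linarith [key ▸ hrR]
end

section
/- Let G be a countable group, (G_n)_{n∈ℕ} a decreasing sequence of finite-index subgroups of G, and s ∈ ℕ. Suppose that for every ε > 0 and every finite M ⊆ G there exist n ∈ ℕ and finitely supported functions μ^{(l)} : G → [0,1], l = 0,…,s, satisfying: (a) supp(μ^{(l)}) ∩ (supp(μ^{(l)})·h) = ∅ for every l and every h ∈ G_n with h ≠ 1; (b) ∑_{l=0}^{s} ∑_{h∈G_n} μ^{(l)}(g·h) = 1 for every g ∈ G; (c) sup_{x∈G} |μ^{(l)}(x) − μ^{(l)}(g·x)| ≤ ε for every l and every g ∈ M. Then (G_n) is semi-conjugacy-separating: for every finite subset F ⊆ G there exists n such that for every k ∈ G, the map sending f ∈ F to the left coset (f·k)·G_n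 is injective on F. -/
open scoped Pointwise

/-- The partition-of-unity condition (3) of the decay-functions lemma implies that
the sequence is semi-conjugacy-separating (in the injectivity-on-cosets form). -/
theorem stmt_5 {G : Type*} [Group G] [Countable G]
    (Gn : ℕ → Subgroup G) (hdec : ∀ n, Gn (n + 1) ≤ Gn n)
    (hfi : ∀ n, (Gn n).FiniteIndex) (s : ℕ)
    (hB : ∀ ε > (0 : ℝ), ∀ M : Finset G, ∃ n : ℕ, ∃ μ : Fin (s + 1) → G → ℝ,
        (∀ l, (Function.support (μ l)).Finite) ∧
        (∀ l x, μ l x ∈ Set.Icc (0 : ℝ) 1) ∧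
        (∀ l, ∀ h ∈ Gn n, h ≠ 1 →
          Function.support (μ l) ∩ ((fun x => x * h) '' Function.support (μ l)) = ∅) ∧
        (∀ g : G, ∑ l : Fin (s + 1), ∑ᶠ h : (Gn n), μ l (g * (h : G)) = 1) ∧
        (∀ l, ∀ g ∈ M, ∀ x : G, |μ l x - μ l (g * x)| ≤ ε)) :
    ∀ F : Finset G, ∃ n : ℕ, ∀ k : G,
      Set.InjOn (fun f : G => (QuotientGroup.mk (f * k) : G ⧸ Gn n)) ↑F := by
  classical
  intro F
  set ε : ℝ := 1 / (2 * ((s : ℝ) + 1)) with hε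
  have hεpos : 0 < ε := by positivity
  obtain ⟨n, μ, hfin, hIcc, ha, hb, hc⟩ := hB ε hεpos (F⁻¹ * F)
  refine ⟨n, fun k => ?_⟩
  intro a haF b hbF hab
  by_contra hne
  simp only at hab
  rw [QuotientGroup.eq] at hab
  set g : G := a⁻¹ * b with hg
  have hgM : g ∈ F⁻¹ * F := Finset.mul_mem_mul (Finset.inv_mem_inv haF) hbF
  have hgne : g ≠ 1 := by
    intro h1
    exact hne (inv_mul_eq_one.mp h1)
  have hh : k⁻¹ * g * k ∈ Gn n := by
    have : (a * k)⁻¹ * (b * k) = k⁻¹ * g * k := by rw [hg]; group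
    rwa [this] at hab
  -- pigeonhole: some l has large finsum
  have key : ∃ l : Fin (s + 1), 1 / ((s : ℝ) + 1) ≤ ∑ᶠ h' : (Gn n), μ l (k * (h' : G)) := by
    by_contra hcon
    push_neg at hcon
    have h1 : (∑ l : Fin (s + 1), ∑ᶠ h' : (Gn n), μ l (k * (h' : G))) <
        ∑ _l : Fin (s + 1), 1 / ((s : ℝ) + 1) :=
      Finset.sum_lt_sum_of_nonempty Finset.univ_nonempty (fun l _ => hcon l)
    rw [hb k] at h1
    rw [Finset.sum_const, Finset.card_univ, Fintype.card_fin, nsmul_eq_mul] at h1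
    have hs1 : ((s : ℝ) + 1) ≠ 0 := by positivity
    rw [show ((s + 1 : ℕ) : ℝ) = (s : ℝ) + 1 by push_cast; ring] at h1
    rw [mul_one_div, div_self hs1] at h1
    exact lt_irrefl 1 h1
  obtain ⟨l, hl⟩ := key
  have hspos : (0 : ℝ) < 1 / ((s : ℝ) + 1) := by positivity
  -- a support point exists
  have hex : ∃ h₀ : (Gn n), μ l (k * (h₀ : G)) ≠ 0 := by
    by_contra hcon
    push_neg at hcon
    rw [finsum_eq_zero_of_forall_eq_zero hcon] at hl
    linarith
  obtain ⟨h₀, hh₀⟩ := hex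
  -- uniqueness of support point in the coset
  have huniq : ∀ x y : (Gn n), μ l (k * (x : G)) ≠ 0 → μ l (k * (y : G)) ≠ 0 → x = y := by
    intro x y hx hy
    by_contra hxy
    have hmem : ((x : G)⁻¹ * (y : G)) ∈ Gn n := mul_mem (inv_mem x.2) y.2
    have hne1 : ((x : G)⁻¹ * (y : G)) ≠ 1 := by
      intro h1
      exact hxy (Subtype.ext (inv_mul_eq_one.mp h1))
    have hd := ha l _ hmem hne1
    rw [Set.eq_empty_iff_forall_notMem] at hd
    refine hd (k * (y : G)) ⟨Function.mem_support.mpr hy,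
      ⟨k * (x : G), Function.mem_support.mpr hx, ?_⟩⟩
    group
  have hS : ∑ᶠ h' : (Gn n), μ l (k * (h' : G)) = μ l (k * (h₀ : G)) :=
    finsum_eq_single _ h₀ (fun x hx => by
      by_contra hzx
      exact hx (huniq x h₀ hzx hh₀))
  rw [hS] at hl
  -- the translated point is also in the support
  have hcc := hc l g hgM (k * (h₀ : G))
  have h2e : 1 / ((s : ℝ) + 1) = 2 * ε := by rw [hε]; field_simp
  have hgx : μ l (g * (k * (h₀ : G))) ≠ 0 := by
    have h1 := (abs_le.mp hcc).2
    have : 0 < μ l (g * (k * (h₀ : G))) := by linarith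
    exact this.ne'
  -- contradiction with disjointness
  have hmem2 : ((h₀ : G)⁻¹ * (k⁻¹ * g * k) * (h₀ : G)) ∈ Gn n :=
    mul_mem (mul_mem (inv_mem h₀.2) hh) h₀.2
  have hne2 : ((h₀ : G)⁻¹ * (k⁻¹ * g * k) * (h₀ : G)) ≠ 1 := by
    intro h1
    apply hgne
    have h2 : k⁻¹ * g * k = 1 := by
      have := congrArg (fun z => (h₀ : G) * z * (h₀ : G)⁻¹) h1
      simpa [mul_assoc] using this
    have := congrArg (fun z => k * z * k⁻¹) h2
    simpa [mul_assoc] using this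
  have hd := ha l _ hmem2 hne2
  rw [Set.eq_empty_iff_forall_notMem] at hd
  refine hd (g * (k * (h₀ : G))) ⟨Function.mem_support.mpr hgx,
    ⟨k * (h₀ : G), Function.mem_support.mpr (by intro h0; rw [h0] at hl; linarith), ?_⟩⟩
  group
end

section
/- Let G be a topological group, H a closed subgroup of G whose induced subspace topology is discrete, and H' a subgroup of G with H' ≤ H. Suppose there exists a compact subset K ⊆ G such that G = K·H', i.e. every g ∈ G can be written as g = k·h with k ∈ K and h ∈ H'. Then H' has finite index in H: the set of left cosets of H' in H is finite. -/
/-- If `H` is a closed discrete subgroup of a topological group `G` and `H' ≤ H`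
is cocompact in `G` (i.e. `G = K·H'` for a compact `K`), then `H'` has finite
index in `H`. -/
theorem stmt_10 {G : Type*} [Group G] [TopologicalSpace G] [IsTopologicalGroup G]
    (H H' : Subgroup G) (hle : H' ≤ H)
    (hclosed : IsClosed (H : Set G)) (hdisc : DiscreteTopology H)
    (K : Set G) (hK : IsCompact K)
    (hcover : ∀ g : G, ∃ k ∈ K, ∃ h ∈ H', g = k * h) :
    (H'.subgroupOf H).FiniteIndex := by
  have hS : ((H : Set G) ∩ K).Finite := by
    have hcpt : IsCompact ((H : Set G) ∩ K) := hK.inter_left hclosed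
    have hd : DiscreteTopology ((H : Set G) ∩ K : Set G) :=
      DiscreteTopology.of_subset hdisc Set.inter_subset_left
    exact hcpt.finite (isDiscrete_iff_discreteTopology.mpr hd)
  have hfin : Finite (H ⧸ H'.subgroupOf H) := by
    have : Finite ((H : Set G) ∩ K : Set G) := hS
    refine Finite.of_surjective
      (fun x : ((H : Set G) ∩ K : Set G) =>
        (QuotientGroup.mk (⟨x.1, x.2.1⟩ : H) : H ⧸ H'.subgroupOf H)) ?_
    rintro ⟨h⟩
    obtain ⟨k, hk, h', hh', heq⟩ := hcover (h : G)
    have hkH : k ∈ H := by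
      have hk2 : k = (h : G) * h'⁻¹ := by rw [heq]; group
      rw [hk2]; exact H.mul_mem h.2 (H.inv_mem (hle hh'))
    refine ⟨⟨k, hkH, hk⟩, ?_⟩
    refine (QuotientGroup.eq).mpr ?_
    show (⟨k, hkH⟩ : H)⁻¹ * h ∈ H'.subgroupOf H
    simpa [Subgroup.mem_subgroupOf, heq, inv_mul_cancel_left] using hh'
  exact Subgroup.finiteIndex_of_finite_quotient
end

section
/- Let G be a topological group and H ≤ G a closed subgroup with discrete induced topology that is cocompact, i.e. there is a compact set K ⊆ G with G = K·H. Let (σ_n)_{n∈ℕ} be a sequence of group automorphisms of G that are homeomorphisms, such that: (a) σ_n(H) ⊆ H for every n; and (b) for every compact set K' ⊆ G and every open neighbourhood U of the identity there exists n with K' ⊆ (σ_n ∘ σ_{n-1} ∘ ⋯ ∘ σ_0)(U). Set H_n = (σ_n ∘ σ_{n-1} ∘ ⋯ ∘ σ_0)(H). Then: (i) each H_n is a subgroup of H of finite index in H; and (ii) ⋂_{n∈ℕ} H_n = {1}. In particular, for every h ∈ H with h ≠ 1 there is a finite-index subgroup of H not containing h, so H is residually finite. -/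
/-- The composition `σ_n ∘ σ_{n-1} ∘ ⋯ ∘ σ_0` of a sequence of automorphisms. -/
def comps {G : Type*} [Group G] (σ : ℕ → G ≃* G) : ℕ → G ≃* G
  | 0 => σ 0
  | n + 1 => (comps σ n).trans (σ (n + 1))

/-- Key criterion (Lemma 3.2): a closed, discrete, cocompact subgroup `H` of a
topological group admitting a sequence of expanding automorphisms preserving `H`
yields finite-index subgroups `H_n = (σ_n ∘ ⋯ ∘ σ_0)(H)` of `H` with trivial
intersection; in particular `H` is residually finite. -/
theorem stmt_11 {G : Type*} [Group G] [TopologicalSpace G] [IsTopologicalGroup G]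
    (H : Subgroup G) (hclosed : IsClosed (H : Set G)) (hdisc : DiscreteTopology H)
    (K : Set G) (hK : IsCompact K)
    (hcocompact : ∀ g : G, ∃ k ∈ K, ∃ h ∈ H, g = k * h)
    (σ : ℕ → G ≃* G)
    (hcont : ∀ n, Continuous (σ n)) (hcont' : ∀ n, Continuous (σ n).symm)
    (hH : ∀ n, Subgroup.map (σ n).toMonoidHom H ≤ H)
    (hexp : ∀ K' : Set G, IsCompact K' → ∀ U : Set G, IsOpen U → (1 : G) ∈ U →
      ∃ n, K' ⊆ (comps σ n) '' U) :
    (∀ n, Subgroup.map (comps σ n).toMonoidHom H ≤ H) ∧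
    (∀ n, ((Subgroup.map (comps σ n).toMonoidHom H).subgroupOf H).FiniteIndex) ∧
    (⋂ n, ((Subgroup.map (comps σ n).toMonoidHom H : Subgroup G) : Set G)) = {1} ∧
    (∀ h : H, h ≠ 1 → ∃ H' : Subgroup H, H'.FiniteIndex ∧ h ∉ H') := by
  -- continuity of the compositions
  have hcompscont : ∀ n, Continuous (comps σ n) := by
    intro n
    induction n with
    | zero => exact hcont 0
    | succ n ih =>
      show Continuous ((comps σ n).trans (σ (n + 1)))
      rw [MulEquiv.coe_trans]
      exact (hcont (n + 1)).comp ih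
  -- H_n ≤ H
  have mapH : ∀ n, Subgroup.map (comps σ n).toMonoidHom H ≤ H := by
    intro n
    induction n with
    | zero => exact hH 0
    | succ n ih =>
      rintro x ⟨y, hy, rfl⟩
      exact hH (n + 1) ⟨comps σ n y, ih ⟨y, hy, rfl⟩, rfl⟩
  -- cocompactness for each level
  have hcoco : ∀ n (g : G), ∃ k ∈ comps σ n '' K,
      ∃ h ∈ Subgroup.map (comps σ n).toMonoidHom H, g = k * h := by
    intro n g
    obtain ⟨k, hk, h, hh, hg⟩ := hcocompact ((comps σ n).symm g)
    refine ⟨comps σ n k, ⟨k, hk, rfl⟩, comps σ n h, ⟨h, hh, rfl⟩, ?_⟩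
    have := congrArg (comps σ n) hg
    simpa [map_mul] using this
  -- finite index
  have hfin : ∀ n, ((Subgroup.map (comps σ n).toMonoidHom H).subgroupOf H).FiniteIndex := by
    intro n
    set Hn := Subgroup.map (comps σ n).toMonoidHom H with hHn
    have hScompact : IsCompact (comps σ n '' K ∩ (H : Set G)) :=
      (hK.image (hcompscont n)).inter_right hclosed
    have hSd : DiscreteTopology (comps σ n '' K ∩ (H : Set G) : Set G) :=
      DiscreteTopology.of_subset hdisc Set.inter_subset_right
    have hSfin : (comps σ n '' K ∩ (H : Set G)).Finite := hScompact.finite (isDiscrete_iff_discreteTopology.mpr hSd)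
    have hTfin : {x : H | (x : G) ∈ comps σ n '' K}.Finite := by
      apply Set.Finite.of_finite_image (f := (fun x : H => (x : G)))
        (hSfin.subset ?_) (Subtype.val_injective.injOn)
      rintro _ ⟨x, hx, rfl⟩
      exact ⟨hx, x.2⟩
    haveI : Finite {x : H | (x : G) ∈ comps σ n '' K} := hTfin.to_subtype
    have hsurj : Function.Surjective
        (fun t : {x : H | (x : G) ∈ comps σ n '' K} =>
          (QuotientGroup.mk t.1 : H ⧸ Hn.subgroupOf H)) := by
      intro q
      induction q using QuotientGroup.induction_on with
      | H h =>
        obtain ⟨k, hk, h', hh', heq⟩ := hcoco n (h : G)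
        have hkH : k ∈ H := by
          have hkeq : k = (h : G) * h'⁻¹ := by rw [heq]; group
          rw [hkeq]
          exact H.mul_mem h.2 (H.inv_mem (mapH n hh'))
        refine ⟨⟨⟨k, hkH⟩, hk⟩, ?_⟩
        refine (QuotientGroup.eq).mpr ?_
        rw [Subgroup.mem_subgroupOf]
        have : (((⟨k, hkH⟩ : H)⁻¹ * h : H) : G) = h' := by
          push_cast
          rw [heq]
          group
        rw [this]
        exact hh'
    haveI : Finite (H ⧸ Hn.subgroupOf H) := Finite.of_surjective _ hsurj
    exact Subgroup.finiteIndex_of_finite_quotient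
  -- trivial intersection
  have hV : ∃ V : Set G, IsOpen V ∧ (fun x : H => (x : G)) ⁻¹' V = ({1} : Set H) := by
    have h1 : IsOpen ({1} : Set H) := isOpen_discrete _
    rw [isOpen_induced_iff] at h1
    obtain ⟨V, hV1, hV2⟩ := h1
    exact ⟨V, hV1, hV2⟩
  obtain ⟨V, hVopen, hVH⟩ := hV
  have h1V : (1 : G) ∈ V := by
    have : (1 : H) ∈ (fun x : H => (x : G)) ⁻¹' V := by rw [hVH]; rfl
    simpa using this
  have hint : (⋂ n, ((Subgroup.map (comps σ n).toMonoidHom H : Subgroup G) : Set G))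
      = {1} := by
    apply subset_antisymm
    · intro x hx
      obtain ⟨n, hn⟩ := hexp {x} (isCompact_singleton) V hVopen h1V
      have hxV : x ∈ comps σ n '' V := hn rfl
      obtain ⟨u, hu, hux⟩ := hxV
      have hxn : x ∈ Subgroup.map (comps σ n).toMonoidHom H :=
        Set.mem_iInter.mp hx n
      obtain ⟨h', hh', hhx⟩ := hxn
      have huh : u = h' := (comps σ n).injective (by rw [hux]; exact hhx.symm)
      have huH : u ∈ H := huh ▸ hh'
      have : (⟨u, huH⟩ : H) ∈ (fun x : H => (x : G)) ⁻¹' V := hu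
      rw [hVH] at this
      have hu1 : u = 1 := congrArg (fun x : H => (x : G)) this
      have : x = 1 := by rw [← hux, hu1, map_one]
      simpa using this
    · intro x hx
      rw [Set.mem_singleton_iff] at hx
      subst hx
      exact Set.mem_iInter.mpr fun n => (Subgroup.map (comps σ n).toMonoidHom H).one_mem
  refine ⟨mapH, hfin, hint, ?_⟩
  intro h hne
  have hG : (h : G) ≠ 1 := by
    intro hc
    exact hne (Subtype.ext hc)
  have : ∃ n, (h : G) ∉ Subgroup.map (comps σ n).toMonoidHom H := by
    by_contra hc
    push_neg at hc
    have : (h : G) ∈ ⋂ n, ((Subgroup.map (comps σ n).toMonoidHom H : Subgroup G) : Set G) :=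
      Set.mem_iInter.mpr hc
    rw [hint] at this
    exact hG this
  obtain ⟨n, hn⟩ := this
  refine ⟨(Subgroup.map (comps σ n).toMonoidHom H).subgroupOf H, hfin n, ?_⟩
  rw [Subgroup.mem_subgroupOf]
  exact hn
end

section
/- Let G be a finitely generated nilpotent group. Then there exists m ∈ ℕ (which can be taken to be 3^ℓ, where ℓ is the Hirsch length of G) such that for every finite subset M ⊆ G there exist a finite subset F ⊆ G containing the identity and elements g_1, …, g_m ∈ G with the property: for every g ∈ F⁻¹F = {f₁⁻¹·f₂ : f₁, f₂ ∈ F} there is j ∈ {1,…,m} such that M·g ⊆ g_j·F, i.e. for every a ∈ M there is f ∈ F with a·g = g_j·f. -/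
open Subgroup
open scoped commutatorElement

universe u

section helpers

variable {G : Type u} [Group G]

/-- the target property, abstracted -/
def GrowthP (G : Type u) [Group G] : Prop :=
  ∃ m : ℕ, ∀ M : Finset G, ∃ F : Finset G, (1 : G) ∈ F ∧ ∃ g : Fin m → G,
    ∀ f₁ ∈ F, ∀ f₂ ∈ F, ∃ j : Fin m, ∀ a ∈ M, ∃ f ∈ F,
      a * (f₁⁻¹ * f₂) = g j * f

theorem normal_of_le_center {N : Subgroup G} (h : N ≤ center G) : N.Normal := by
  constructor
  intro n hn g
  have := (Subgroup.mem_center_iff.mp (h hn) g).symm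
  rw [show g * n * g⁻¹ = (g * n) * g⁻¹ from rfl, ← this, mul_assoc, mul_inv_cancel, mul_one]
  exact hn

theorem zpowers_central_normal {z : G} (hz : z ∈ center G) : (zpowers z).Normal :=
  normal_of_le_center (by
    rw [zpowers_le]; exact hz)

end helpers

inductive GTower : ∀ (n : ℕ) (G : Type u) [Group G], Prop
  | base (G : Type u) [Group G] (h : Subsingleton G) : GTower 0 G
  | step (n : ℕ) (G : Type u) [Group G] (z : G) (hz : z ∈ Subgroup.center G)
      (h : @GTower n (G ⧸ Subgroup.zpowers z)
        (@QuotientGroup.Quotient.group _ _ _ (zpowers_central_normal hz))) :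
      GTower (n + 1) G

section transport

theorem center_map_le {G H : Type*} [Group G] [Group H] (f : G →* H)
    (hf : Function.Surjective f) {x : G} (hx : x ∈ Subgroup.center G) :
    f x ∈ Subgroup.center H := by
  rw [Subgroup.mem_center_iff]
  intro h
  obtain ⟨g, rfl⟩ := hf h
  rw [← map_mul, ← map_mul, (Subgroup.mem_center_iff.mp hx g)]

theorem GTower_equiv {n : ℕ} {G : Type u} [Group G] (h : GTower n G) :
    ∀ (H : Type u) [Group H], (G ≃* H) → GTower n H := by
  induction h with
  | base G h =>
      intro H _ e
      exact GTower.base _ (e.symm.toEquiv.subsingleton)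
  | step n G z hz h ih =>
      intro H _ e
      have hz' : e z ∈ Subgroup.center H := center_map_le e.toMonoidHom e.surjective hz
      haveI := zpowers_central_normal hz
      haveI := zpowers_central_normal hz'
      refine GTower.step n H (e z) hz' (ih _ ?_)
      exact QuotientGroup.congr _ _ e (e.toMonoidHom.map_zpowers z)

end transport


section stepsec
variable {G : Type u} [Group G]

private theorem central_calc {z : G} (hzc : ∀ (k : ℤ) (x : G), x * z ^ k = z ^ k * x)
    (a A B R S : G) (i₁ i₂ ew d E' : ℤ) (hkey : a * A⁻¹ * B = R * S * z ^ ew)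
    (hd : ew + (i₂ - i₁) = d + E') :
    a * ((A * z ^ i₁)⁻¹ * (B * z ^ i₂)) = (R * z ^ d) * (S * z ^ E') := by
  have rhs : (R * z ^ d) * (S * z ^ E') = R * S * z ^ (d + E') := by
    calc (R * z ^ d) * (S * z ^ E') = R * (z ^ d * S) * z ^ E' := by
          simp only [mul_assoc]
      _ = R * (S * z ^ d) * z ^ E' := by rw [hzc d S]
      _ = R * S * z ^ (d + E') := by rw [zpow_add]; simp only [mul_assoc]
  rw [rhs, ← hd]
  calc a * ((A * z ^ i₁)⁻¹ * (B * z ^ i₂))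
      = a * ((z ^ i₁)⁻¹ * A⁻¹ * (B * z ^ i₂)) := by rw [mul_inv_rev]
    _ = a * (z ^ (-i₁) * (A⁻¹ * (B * z ^ i₂))) := by rw [zpow_neg]; simp only [mul_assoc]
    _ = a * ((A⁻¹ * (B * z ^ i₂)) * z ^ (-i₁)) := by rw [hzc (-i₁) (A⁻¹ * (B * z ^ i₂))]
    _ = a * A⁻¹ * B * (z ^ i₂ * z ^ (-i₁)) := by simp only [mul_assoc]
    _ = a * A⁻¹ * B * z ^ (i₂ + -i₁) := by rw [← zpow_add]
    _ = R * S * z ^ ew * z ^ (i₂ + -i₁) := by rw [hkey]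
    _ = R * S * z ^ (ew + (i₂ - i₁)) := by
          rw [mul_assoc, ← zpow_add, show ew + (i₂ + -i₁) = ew + (i₂ - i₁) by ring]

theorem growthP_step {z : G} (hz : z ∈ center G)
    (hq : @GrowthP (G ⧸ zpowers z)
      (@QuotientGroup.Quotient.group _ _ _ (zpowers_central_normal hz))) :
    GrowthP G := by
  classical
  haveI := zpowers_central_normal hz
  set Q := G ⧸ zpowers z with hQ
  set π : G →* Q := QuotientGroup.mk' (zpowers z) with hπ
  have hzc : ∀ (k : ℤ) (x : G), x * z ^ k = z ^ k * x := fun k x =>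
    Subgroup.mem_center_iff.mp ((Subgroup.center G).zpow_mem hz k) x
  obtain ⟨m, hm⟩ := hq
  refine ⟨m * 3, ?_⟩
  intro M
  obtain ⟨Fb, hFb1, gb, hmain⟩ := hm (M.image π)
  -- section of π
  set σ : Q → G := fun x => if x = (1 : Q) then 1 else x.out with hσdef
  have hσ : ∀ x : Q, π (σ x) = x := by
    intro x
    by_cases hx : x = 1
    · subst hx; simp [hσdef]
    · simp only [hσdef, if_neg hx]
      exact QuotientGroup.out_eq' x
  have hσ1 : σ 1 = 1 := if_pos rfl
  -- exponent extraction
  set ee : G → ℤ := fun w => if h : ∃ k : ℤ, z ^ k = w then h.choose else 0 with heedef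
  have hee : ∀ w : G, w ∈ zpowers z → z ^ (ee w) = w := by
    intro w hw
    rw [Subgroup.mem_zpowers_iff] at hw
    simp only [heedef, dif_pos hw]
    exact hw.choose_spec
  -- the constant C
  set wfun : G × Q × Q × Fin m × Q → G := fun t =>
    (σ (gb t.2.2.2.1) * σ t.2.2.2.2)⁻¹ * (t.1 * (σ t.2.1)⁻¹ * σ t.2.2.1) with hwfun
  set TT : Finset (G × Q × Q × Fin m × Q) :=
    M ×ˢ (Fb ×ˢ (Fb ×ˢ ((Finset.univ : Finset (Fin m)) ×ˢ Fb))) with hTT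
  set C : ℕ := TT.sup fun t => (ee (wfun t)).natAbs with hC
  have hCb : ∀ a ∈ M, ∀ p ∈ Fb, ∀ q ∈ Fb, ∀ (j : Fin m), ∀ f ∈ Fb,
      (ee ((σ (gb j) * σ f)⁻¹ * (a * (σ p)⁻¹ * σ q))).natAbs ≤ C := by
    intro a ha p hp q hq j f hf
    have : (a, p, q, j, f) ∈ TT := by
      simp only [hTT, Finset.mem_product]
      exact ⟨ha, hp, hq, Finset.mem_univ _, hf⟩
    exact Finset.le_sup (f := fun t => (ee (wfun t)).natAbs) this
  -- the set F
  set F : Finset G := (Fb ×ˢ Finset.Icc (-(3 * (C : ℤ))) (3 * C)).image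
    (fun pr => σ pr.1 * z ^ pr.2) with hF
  have h1F : (1 : G) ∈ F := by
    refine Finset.mem_image.mpr ⟨(1, 0), ?_, by simp [hσ1]⟩
    simp only [Finset.mem_product, Finset.mem_Icc]
    refine ⟨hFb1, by omega, by omega⟩
  -- the translates
  set g : Fin (m * 3) → G := fun j' =>
    σ (gb (finProdFinEquiv.symm j').1) *
      z ^ (((((finProdFinEquiv.symm j').2 : ℕ) : ℤ) - 1) * (4 * C)) with hg
  refine ⟨F, h1F, g, ?_⟩
  intro f₁ hf₁ f₂ hf₂
  obtain ⟨⟨p, i₁⟩, hmem₁, rfl⟩ := Finset.mem_image.mp hf₁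
  obtain ⟨⟨q, i₂⟩, hmem₂, rfl⟩ := Finset.mem_image.mp hf₂
  rw [Finset.mem_product, Finset.mem_Icc] at hmem₁ hmem₂
  have hp := hmem₁.1
  have hi₁l := hmem₁.2.1
  have hi₁r := hmem₁.2.2
  have hq := hmem₂.1
  have hi₂l := hmem₂.2.1
  have hi₂r := hmem₂.2.2
  obtain ⟨j, hj⟩ := hmain p hp q hq
  -- choose the shift d
  set u : ℤ := i₂ - i₁ with hu
  set t : Fin 3 := if 2 * (C : ℤ) < u then 2 else if u < -(2 * (C : ℤ)) then 0 else 1 with ht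
  set d : ℤ := (((t : ℕ) : ℤ) - 1) * (4 * C) with hd
  have hdu : -(2 * (C : ℤ)) ≤ u - d ∧ u - d ≤ 2 * C := by
    have h2 : ((t : ℕ) : ℤ) = if 2 * (C : ℤ) < u then 2 else if u < -(2 * (C : ℤ)) then 0 else 1 := by
      rw [ht]; split_ifs <;> rfl
    rw [hd, h2]
    split_ifs with ha hb <;> omega
  refine ⟨finProdFinEquiv (j, t), ?_⟩
  intro a ha
  obtain ⟨fb, hfb, heq⟩ := hj (π a) (Finset.mem_image_of_mem π ha)
  set w : G := (σ (gb j) * σ fb)⁻¹ * (a * (σ p)⁻¹ * σ q) with hw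
  have hwker : w ∈ zpowers z := by
    have hw1 : π w = (gb j * fb)⁻¹ * (π a * (p⁻¹ * q)) := by
      simp only [hw, map_mul, map_inv, hσ, mul_inv_rev, mul_assoc]
    rw [heq, inv_mul_cancel] at hw1
    rw [← QuotientGroup.ker_mk' (zpowers z)]
    exact hw1
  have hwz : z ^ ee w = w := hee w hwker
  have hwb : (ee w).natAbs ≤ C := hCb a ha p hp q hq j fb hfb
  set E' : ℤ := ee w + u - d with hE'
  refine ⟨σ fb * z ^ E', ?_, ?_⟩
  · refine Finset.mem_image.mpr ⟨(fb, E'), ?_, rfl⟩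
    simp only [Finset.mem_product, Finset.mem_Icc]
    refine ⟨hfb, by omega, by omega⟩
  · have hkey : a * (σ p)⁻¹ * σ q = σ (gb j) * σ fb * z ^ (ee w) := by
      rw [hwz, hw]
      exact (mul_inv_cancel_left _ _).symm
    have hgj : g (finProdFinEquiv (j, t)) = σ (gb j) * z ^ d := by
      simp only [hg, Equiv.symm_apply_apply, hd]
    rw [hgj]
    exact central_calc hzc a (σ p) (σ q) (σ (gb j)) (σ fb) i₁ i₂ (ee w) d E'
      hkey (by rw [hE', hu]; ring)


theorem growthP_subsingleton (h : Subsingleton G) : GrowthP G := by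
  refine ⟨1, fun M => ⟨{1}, Finset.mem_singleton_self 1, fun _ => 1, ?_⟩⟩
  intro f₁ _ f₂ _
  exact ⟨0, fun a _ => ⟨1, Finset.mem_singleton_self 1, Subsingleton.elim _ _⟩⟩

theorem GTower.growthP {n : ℕ} {G : Type u} [Group G] (h : GTower n G) : GrowthP G := by
  induction h with
  | base G h => exact growthP_subsingleton h
  | step n G z hz h ih => exact growthP_step hz ih

end stepsec


section hallsec
variable {G : Type u} [Group G]

noncomputable def Cgen (S : Finset G) : ℕ → Finset G
  | 0 => S
  | (k+1) => letI := Classical.decEq G; ((Cgen S k) ×ˢ S).image fun p => ⁅p.1, p.2⁆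

theorem mem_Cgen_succ {S : Finset G} {k : ℕ} {x : G} :
    x ∈ Cgen S (k+1) ↔ ∃ a ∈ Cgen S k, ∃ s ∈ S, ⁅a, s⁆ = x := by
  letI := Classical.decEq G
  show x ∈ Finset.image _ _ ↔ _
  simp only [Finset.mem_image, Finset.mem_product]
  constructor
  · rintro ⟨⟨a, s⟩, ⟨h1, h2⟩, rfl⟩; exact ⟨a, h1, s, h2, rfl⟩
  · rintro ⟨a, h1, s, h2, rfl⟩; exact ⟨(a, s), ⟨h1, h2⟩, rfl⟩


theorem Cgen_subset (S : Finset G) : ∀ k, ∀ x ∈ Cgen S k, x ∈ (⊤ : Subgroup G).lowerCentralSeries k := by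
  intro k
  induction k with
  | zero => intro x _; exact mem_top x
  | succ k ih =>
      intro x hx
      obtain ⟨a, ha, s, hs, rfl⟩ := mem_Cgen_succ.mp hx
      exact commutator_mem_commutator (ih a ha) (mem_top s)

noncomputable def Dgen (S : Finset G) (c k : ℕ) : Finset G :=
  letI := Classical.decEq G; (Finset.Icc k c).biUnion (Cgen S)

theorem mem_Dgen {S : Finset G} {c k : ℕ} {x : G} :
    x ∈ Dgen S c k ↔ ∃ j, k ≤ j ∧ j ≤ c ∧ x ∈ Cgen S j := by
  letI := Classical.decEq G
  show x ∈ Finset.biUnion _ _ ↔ _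
  simp only [Finset.mem_biUnion, Finset.mem_Icc]
  tauto

theorem Dgen_subset (S : Finset G) (c k : ℕ) : ∀ x ∈ Dgen S c k, x ∈ (⊤ : Subgroup G).lowerCentralSeries k := by
  intro x hx
  obtain ⟨j, hkj, _, hj⟩ := mem_Dgen.mp hx
  exact Subgroup.lowerCentralSeries_antitone _ hkj (Cgen_subset S j x hj)

theorem lcs_map_surjective {H : Type*} [Group H] (f : G →* H) (hf : Function.Surjective f) :
    ∀ k, Subgroup.map f ((⊤ : Subgroup G).lowerCentralSeries k) = (⊤ : Subgroup H).lowerCentralSeries k := by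
  intro k
  induction k with
  | zero => simpa using Subgroup.map_top_of_surjective f hf
  | succ k ih =>
      show Subgroup.map f ⁅(⊤ : Subgroup G).lowerCentralSeries k, ⊤⁆ = ⁅(⊤ : Subgroup H).lowerCentralSeries k, ⊤⁆
      rw [Subgroup.map_commutator, ih, Subgroup.map_top_of_surjective f hf]

theorem le_center_of_comm_bot {K : Subgroup G} (h : ⁅K, (⊤ : Subgroup G)⁆ = ⊥) :
    K ≤ center G := by
  intro x hx
  rw [Subgroup.mem_center_iff]
  intro g
  have : ⁅x, g⁆ ∈ (⊥ : Subgroup G) := h ▸ commutator_mem_commutator hx (mem_top g)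
  rw [Subgroup.mem_bot, commutatorElement_def] at this
  have hxg : x * g = g * x := by
    have := congrArg (· * (g * x)) this
    simpa [mul_assoc] using this
  exact hxg.symm

theorem hall_aux (S : Finset G) (hS : Subgroup.closure (S : Set G) = ⊤) (c : ℕ)
    (hc : (⊤ : Subgroup G).lowerCentralSeries (c+1) = ⊥) :
    ∀ k, (⊤ : Subgroup G).lowerCentralSeries k = Subgroup.closure ↑(Dgen S c k) ⊔ (⊤ : Subgroup G).lowerCentralSeries (k+1) := by
  intro k
  induction k with
  | zero =>
      rw [Subgroup.lowerCentralSeries_zero, eq_comm, eq_top_iff]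
      calc (⊤ : Subgroup G) = Subgroup.closure ↑S := hS.symm
        _ ≤ Subgroup.closure ↑(Dgen S c 0) := by
            apply Subgroup.closure_mono
            intro x hx
            exact Finset.mem_coe.mpr (mem_Dgen.mpr ⟨0, le_refl 0, Nat.zero_le c, hx⟩)
        _ ≤ _ := le_sup_left
  | succ k ih =>
      apply le_antisymm
      swap
      · apply sup_le
        · rw [Subgroup.closure_le]
          exact fun x hx => Dgen_subset S c (k+1) x hx
        · exact Subgroup.lowerCentralSeries_antitone _ (Nat.le_succ _)
      -- main inclusion, working in the quotient
      set N : Subgroup G := (⊤ : Subgroup G).lowerCentralSeries (k+2) with hN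
      haveI : N.Normal := Subgroup.lowerCentralSeries_normal _ (k+2)
      set π : G →* G ⧸ N := QuotientGroup.mk' N with hπ
      have hsurj : Function.Surjective π := QuotientGroup.mk'_surjective N
      have hker : π.ker = N := QuotientGroup.ker_mk' N
      have hmap : ∀ j, Subgroup.map π ((⊤ : Subgroup G).lowerCentralSeries j) = (⊤ : Subgroup (G ⧸ N)).lowerCentralSeries j :=
        lcs_map_surjective π hsurj
      have hbot : (⊤ : Subgroup (G ⧸ N)).lowerCentralSeries (k+2) = ⊥ := by
        rw [← hmap, Subgroup.map_eq_bot_iff, hker]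
      have hcent : (⊤ : Subgroup (G ⧸ N)).lowerCentralSeries (k+1) ≤ center (G ⧸ N) :=
        le_center_of_comm_bot hbot
      set Tb : Subgroup (G ⧸ N) := closure (π '' ↑(Dgen S c (k+1))) with hTb
      -- main claim in quotient
      have main : ⁅(⊤ : Subgroup (G ⧸ N)).lowerCentralSeries k, (⊤ : Subgroup (G ⧸ N))⁆ ≤ Tb := by
        rw [commutator_le]
        intro x hx g _
        -- rewrite the lcs k as a closure
        rw [← hmap k, ih, Subgroup.map_sup, MonoidHom.map_closure, hmap (k+1),
          ← Subgroup.closure_eq ((⊤ : Subgroup (G ⧸ N)).lowerCentralSeries (k+1)), ← Subgroup.closure_union] at hx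
        have key : x ∈ (⊤ : Subgroup (G ⧸ N)).lowerCentralSeries k ∧ ∀ g : G ⧸ N, ⁅x, g⁆ ∈ Tb := by
          refine closure_induction
            (p := fun x _ => x ∈ (⊤ : Subgroup (G ⧸ N)).lowerCentralSeries k ∧ ∀ g : G ⧸ N, ⁅x, g⁆ ∈ Tb)
            ?_ ?_ ?_ ?_ hx
          · -- generators
            rintro u hu
            rcases hu with ⟨aa, haa, rfl⟩ | hu
            · constructor
              · exact (hmap k) ▸ Subgroup.mem_map_of_mem π (Dgen_subset S c k aa haa)
              · -- induct over g in the quotient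
                intro g
                have hgen : Subgroup.closure (π '' ↑S) = (⊤ : Subgroup (G ⧸ N)) := by
                  rw [← MonoidHom.map_closure, hS, Subgroup.map_top_of_surjective π hsurj]
                have hg : g ∈ Subgroup.closure (π '' ↑S) := hgen ▸ mem_top g
                have hcentu : ∀ h : G ⧸ N, ⁅π aa, h⁆ ∈ center (G ⧸ N) := by
                  intro h
                  apply hcent
                  exact commutator_mem_commutator
                    ((hmap k) ▸ Subgroup.mem_map_of_mem π (Dgen_subset S c k aa haa)) (mem_top h)
                refine closure_induction (p := fun g _ => ⁅π aa, g⁆ ∈ Tb) ?_ ?_ ?_ ?_ hg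
                · rintro v ⟨s, hs, rfl⟩
                  rw [← map_commutatorElement]
                  obtain ⟨j, hkj, hjc, hj⟩ := mem_Dgen.mp (Finset.mem_coe.mp haa)
                  rcases eq_or_lt_of_le hjc with rfl | hjc
                  · have h1 : ⁅aa, s⁆ ∈ (⊤ : Subgroup G).lowerCentralSeries (j+1) :=
                      commutator_mem_commutator (Cgen_subset S j aa hj) (mem_top s)
                    rw [hc, Subgroup.mem_bot] at h1
                    rw [h1, map_one]
                    exact one_mem Tb
                  · apply Subgroup.subset_closure
                    refine ⟨⁅aa, s⁆, Finset.mem_coe.mpr (mem_Dgen.mpr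
                      ⟨j+1, Nat.succ_le_succ hkj, hjc, mem_Cgen_succ.mpr
                        ⟨aa, hj, s, Finset.mem_coe.mp hs, rfl⟩⟩), rfl⟩
                · simpa using one_mem Tb
                · intro g h _ _ ihg ihh
                  have hid : ⁅π aa, g * h⁆ = ⁅π aa, g⁆ * (g * ⁅π aa, h⁆ * g⁻¹) := by
                    simp only [commutatorElement_def]; group
                  have hconj : g * ⁅π aa, h⁆ * g⁻¹ = ⁅π aa, h⁆ := by
                    rw [show g * ⁅π aa, h⁆ = ⁅π aa, h⁆ * g from
                      Subgroup.mem_center_iff.mp (hcentu h) g, mul_inv_cancel_right]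
                  rw [hid, hconj]
                  exact mul_mem ihg ihh
                · intro g _ ihg
                  have hid : ⁅π aa, g⁻¹⁆ = g⁻¹ * ⁅π aa, g⁆⁻¹ * g := by
                    simp only [commutatorElement_def]; group
                  have hconj : g⁻¹ * ⁅π aa, g⁆⁻¹ * g = ⁅π aa, g⁆⁻¹ := by
                    rw [show g⁻¹ * ⁅π aa, g⁆⁻¹ = ⁅π aa, g⁆⁻¹ * g⁻¹ from
                      Subgroup.mem_center_iff.mp ((Subgroup.center _).inv_mem (hcentu g)) g⁻¹,
                      inv_mul_cancel_right]
                  rw [hid, hconj]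
                  exact Subgroup.inv_mem Tb ihg
            · refine ⟨Subgroup.lowerCentralSeries_antitone _ (Nat.le_succ k) hu, fun g => ?_⟩
              have h1 : ⁅u, g⁆ ∈ ⁅(⊤ : Subgroup (G ⧸ N)).lowerCentralSeries (k+1), (⊤ : Subgroup (G ⧸ N))⁆ :=
                commutator_mem_commutator hu (mem_top g)
              have h2 : ⁅u, g⁆ ∈ (⊤ : Subgroup (G ⧸ N)).lowerCentralSeries (k+2) := h1
              rw [hbot, Subgroup.mem_bot] at h2
              rw [h2]
              exact one_mem Tb
          · exact ⟨one_mem _, fun g => by simpa using one_mem Tb⟩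
          · rintro x y _ _ ⟨hxk, hx2⟩ ⟨hyk, hy2⟩
            refine ⟨mul_mem hxk hyk, fun g => ?_⟩
            have hid : ⁅x * y, g⁆ = (x * ⁅y, g⁆ * x⁻¹) * ⁅x, g⁆ := by
              simp only [commutatorElement_def]; group
            have hyc : ⁅y, g⁆ ∈ center (G ⧸ N) :=
              hcent (commutator_mem_commutator hyk (mem_top g))
            have hconj : x * ⁅y, g⁆ * x⁻¹ = ⁅y, g⁆ := by
              rw [show x * ⁅y, g⁆ = ⁅y, g⁆ * x from Subgroup.mem_center_iff.mp hyc x,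
                mul_inv_cancel_right]
            rw [hid, hconj]
            exact mul_mem (hy2 g) (hx2 g)
          · rintro x _ ⟨hxk, hx2⟩
            refine ⟨inv_mem hxk, fun g => ?_⟩
            have hid : ⁅x⁻¹, g⁆ = x⁻¹ * ⁅x, g⁆⁻¹ * x := by
              simp only [commutatorElement_def]; group
            have hxc : ⁅x, g⁆⁻¹ ∈ center (G ⧸ N) :=
              (Subgroup.center _).inv_mem (hcent (commutator_mem_commutator hxk (mem_top g)))
            have hconj : x⁻¹ * ⁅x, g⁆⁻¹ * x = ⁅x, g⁆⁻¹ := by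
              rw [show x⁻¹ * ⁅x, g⁆⁻¹ = ⁅x, g⁆⁻¹ * x⁻¹ from
                Subgroup.mem_center_iff.mp hxc x⁻¹, inv_mul_cancel_right]
            rw [hid, hconj]
            exact Subgroup.inv_mem Tb (hx2 g)
        exact key.2 g
      -- transfer back
      have hq : Subgroup.map π ((⊤ : Subgroup G).lowerCentralSeries (k+1)) ≤
          Subgroup.map π (Subgroup.closure ↑(Dgen S c (k+1))) := by
        rw [hmap (k+1), MonoidHom.map_closure]
        exact main
      rw [Subgroup.map_le_map_iff, hker] at hq
      exact hq

end hallsec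


section assembly

variable {G : Type u} [Group G]

theorem hall (S : Finset G) (hS : Subgroup.closure (S : Set G) = ⊤) (c : ℕ)
    (hc : (⊤ : Subgroup G).lowerCentralSeries (c+1) = ⊥) :
    (⊤ : Subgroup G).lowerCentralSeries c = Subgroup.closure ↑(Cgen S c) := by
  have h := hall_aux S hS c hc c
  rw [hc, sup_bot_eq] at h
  have hD : Dgen S c c = Cgen S c := by
    ext x
    rw [mem_Dgen]
    constructor
    · rintro ⟨j, hcj, hjc, hj⟩
      rwa [le_antisymm hjc hcj] at hj
    · exact fun hx => ⟨c, le_refl c, le_refl c, hx⟩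
  rw [h, hD]

theorem subsingleton_of_top_eq_bot' (h : (⊤ : Subgroup G) = ⊥) : Subsingleton G := by
  constructor
  intro a b
  have ha : a ∈ (⊥ : Subgroup G) := h ▸ mem_top a
  have hb : b ∈ (⊥ : Subgroup G) := h ▸ mem_top b
  rw [Subgroup.mem_bot] at ha hb
  rw [ha, hb]

theorem tower_peel : ∀ (k : ℕ) (G : Type u) [Group G] (T : List G) (_ : T.length = k)
    (N : Subgroup G) (hNc : N ≤ Subgroup.center G)
    (_ : Subgroup.closure {x | x ∈ T} = N) (n : ℕ)
    (_ : @GTower n (G ⧸ N) (@QuotientGroup.Quotient.group _ _ _ (normal_of_le_center hNc))),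
    GTower (n + k) G := by
  intro k
  induction k with
  | zero =>
      intro G _ T hlen N hNc hgen n hT
      have hTnil : T = [] := List.length_eq_zero_iff.mp hlen
      subst hTnil
      have hNbot : N = ⊥ := by
        rw [← hgen, show {x : G | x ∈ ([] : List G)} = (∅ : Set G) by ext y; simp,
          Subgroup.closure_empty]
      haveI := normal_of_le_center hNc
      refine GTower_equiv hT G ?_
      exact (QuotientGroup.quotientMulEquivOfEq hNbot).trans
        (QuotientGroup.quotientBot : G ⧸ (⊥ : Subgroup G) ≃* G)
  | succ k ih =>
      intro G _ T hlen N hNc hgen n hT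
      haveI := normal_of_le_center hNc
      obtain ⟨t, T', rfl⟩ : ∃ t T', T = t :: T' := by
        cases T with
        | nil => simp at hlen
        | cons a l => exact ⟨a, l, rfl⟩
      have hlen' : T'.length = k := by simpa using hlen
      have htN : t ∈ N := hgen ▸ Subgroup.subset_closure (by simp)
      have htc : t ∈ Subgroup.center G := hNc htN
      haveI hzn := zpowers_central_normal htc
      set π : G →* G ⧸ zpowers t := QuotientGroup.mk' (zpowers t) with hπ
      have hsurj : Function.Surjective π := QuotientGroup.mk'_surjective _
      set N' : Subgroup (G ⧸ zpowers t) := N.map π with hN'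
      have hN'c : N' ≤ Subgroup.center _ := by
        rintro x ⟨y, hy, rfl⟩
        exact center_map_le π hsurj (hNc hy)
      haveI : N'.Normal := normal_of_le_center hN'c
      have hgen' : Subgroup.closure {x | x ∈ T'.map π} = N' := by
        have hset : {x : G | x ∈ t :: T'} = insert t {x | x ∈ T'} := by
          ext y; simp [List.mem_cons]
        have hπt : π t = 1 := by
          rw [hπ, QuotientGroup.mk'_apply, QuotientGroup.eq_one_iff]
          exact Subgroup.mem_zpowers t
        have himg : π '' {x | x ∈ t :: T'}
            = insert (1 : G ⧸ zpowers t) (π '' {x | x ∈ T'}) := by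
          rw [hset, Set.image_insert_eq, hπt]
        have hins : Subgroup.closure (insert (1 : G ⧸ zpowers t) (π '' {x | x ∈ T'}))
            = Subgroup.closure (π '' {x | x ∈ T'}) := by
          apply le_antisymm
          · rw [Subgroup.closure_le]
            rintro y (rfl | hy)
            · exact one_mem _
            · exact Subgroup.subset_closure hy
          · exact Subgroup.closure_mono (Set.subset_insert _ _)
        have hmapimg : π '' {x | x ∈ T'} = {x | x ∈ T'.map π} := by
          ext y
          simp only [Set.mem_image, Set.mem_setOf_eq, List.mem_map]
        rw [← hmapimg, ← hins, ← himg, ← MonoidHom.map_closure, hgen]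
      have hzleN : zpowers t ≤ N := (Subgroup.zpowers_le).mpr htN
      have e : ((G ⧸ zpowers t) ⧸ N') ≃* G ⧸ N :=
        QuotientGroup.quotientQuotientEquivQuotient (zpowers t) N hzleN
      have hT' : GTower n ((G ⧸ zpowers t) ⧸ N') := GTower_equiv hT _ e.symm
      have hstep := ih (G ⧸ zpowers t) (T'.map π) (by simpa using hlen') N' hN'c hgen' n hT'
      exact GTower.step (n + k) G t htc hstep

theorem exists_tower : ∀ (c : ℕ) (G : Type u) [Group G], Group.FG G →
    (⊤ : Subgroup G).lowerCentralSeries c = ⊥ → ∃ n, GTower n G := by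
  intro c
  induction c with
  | zero =>
      intro G _ _ h
      rw [Subgroup.lowerCentralSeries_zero] at h
      exact ⟨0, GTower.base G (subsingleton_of_top_eq_bot' h)⟩
  | succ c ih =>
      intro G _ hfg hc
      obtain ⟨S, hS⟩ := Group.fg_def.mp hfg
      have hcen : (⊤ : Subgroup G).lowerCentralSeries c ≤ Subgroup.center G := by
        apply le_center_of_comm_bot
        exact hc
      have hgenN : (⊤ : Subgroup G).lowerCentralSeries c = Subgroup.closure ↑(Cgen S c) := hall S hS c hc
      haveI : Group.FG G := hfg
      haveI : Group.FG (G ⧸ (⊤ : Subgroup G).lowerCentralSeries c) :=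
        Group.fg_of_surjective (QuotientGroup.mk'_surjective ((⊤ : Subgroup G).lowerCentralSeries c))
      have hq : (⊤ : Subgroup (G ⧸ (⊤ : Subgroup G).lowerCentralSeries c)).lowerCentralSeries c = ⊥ := by
        rw [← lcs_map_surjective (QuotientGroup.mk' ((⊤ : Subgroup G).lowerCentralSeries c))
          (QuotientGroup.mk'_surjective _) c, Subgroup.map_eq_bot_iff, QuotientGroup.ker_mk']
      obtain ⟨n, hT⟩ := ih (G ⧸ (⊤ : Subgroup G).lowerCentralSeries c) inferInstance hq
      have hgenL : Subgroup.closure {x : G | x ∈ (Cgen S c).toList} = (⊤ : Subgroup G).lowerCentralSeries c := by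
        rw [show {x : G | x ∈ (Cgen S c).toList} = (↑(Cgen S c) : Set G) by
          ext y; simp [Finset.mem_toList], ← hgenN]
      refine ⟨n + (Cgen S c).toList.length, tower_peel _ G (Cgen S c).toList rfl
        ((⊤ : Subgroup G).lowerCentralSeries c) hcen hgenL n hT⟩

end assembly

/-- Lemma 6.1 (growth lemma for nilpotent groups): for a finitely generated
nilpotent group `G` there is `m ∈ ℕ` such that for every finite `M ⊆ G` there are
a finite set `F ∋ 1` and elements `g_1, …, g_m` such that for every
`x ∈ F⁻¹F` there is `j` with `M·x ⊆ g_j·F`. -/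
theorem stmt_12 {G : Type*} [Group G] [Group.IsNilpotent G] (hfg : Group.FG G) :
    ∃ m : ℕ, ∀ M : Finset G, ∃ F : Finset G, (1 : G) ∈ F ∧ ∃ g : Fin m → G,
      ∀ f₁ ∈ F, ∀ f₂ ∈ F, ∃ j : Fin m, ∀ a ∈ M, ∃ f ∈ F,
        a * (f₁⁻¹ * f₂) = g j * f := by
  obtain ⟨c, hc⟩ := Subgroup.nilpotent_iff_lowerCentralSeries.mp ‹Group.IsNilpotent G›
  obtain ⟨n, hT⟩ := exists_tower c G hfg hc
  exact hT.growthP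
end

section
/- Let G be a countable discrete group, X a locally compact Hausdorff space, α : G ↷ X a free action by homeomorphisms, and let ᾱ denote the induced action on the commutative C*-algebra C₀(X) of continuous complex-valued functions on X vanishing at infinity, given by ᾱ_g(f) = f ∘ α_{g⁻¹}. Let d ∈ ℕ. Then the following are equivalent. (I) For every ε > 0 and all finite subsets M ⊆ G and F ⊆ C₀(X), there exist finitely supported maps μ^{(l)} : G → C₀(X) for l = 0,…,d, each μ^{(l)}_g a positive contraction (pointwise real-valued with values in [0,1]), satisfying: (a) ‖(∑_{l=0}^{d} ∑_{g∈G} μ^{(l)}_g)·a − a‖ ≤ ε for every a ∈ F; (b) μ^{(l)}_g · μ^{(l)}_h = 0 for every l and all g ≠ h in G; (c) ‖∑_{h∈E} (ᾱ_g(μ^{(l)}_h) − μ^{(l)}_{g·h})·a‖ ≤ ε for every a ∈ F, every l, every g ∈ M and every finite subset E ⊆ G; (d) ‖[∑_{g∈E} μ^{(l)}_g, a]‖ ≤ ε for every a ∈ F, every l and every finite E ⊆ G (automatic here by commutativity). (II) For every ε > 0, every finite M ⊆ G and every compact subset K ⊆ X, there exist finitely supported maps μ^{(l)} : G → C_c(X)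 for l = 0,…,d, each μ^{(l)}_g a compactly supported continuous function with values in [0,1], satisfying: (a') ∑_{l=0}^{d} ∑_{g∈G} μ^{(l)}_g ≤ 1 pointwise and ∑_{l=0}^{d} ∑_{g∈G} μ^{(l)}_g(x) = 1 for every x ∈ K; (b') μ^{(l)}_g · μ^{(l)}_h = 0 for every l and all g ≠ h in G; (c') ‖μ^{(l)}_h ∘ α_{g⁻¹} − μ^{(l)}_{g·h}‖_∞ ≤ ε for every l, every g ∈ M and every h ∈ G. -/
set_option maxHeartbeats 1000000


open scoped ZeroAtInfty

/-- Build a complex-valued `C₀` function from a compactly supported real continuous map. -/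
noncomputable def stmt14.toC0 {X : Type*} [TopologicalSpace X] (f : C(X, ℝ))
    (hf : HasCompactSupport ⇑f) : C₀(X, ℂ) where
  toFun := fun x => ((f x : ℝ) : ℂ)
  continuous_toFun := Complex.continuous_ofReal.comp f.continuous
  zero_at_infty' :=
    (hf.comp_left (g := (fun r : ℝ => (r : ℂ))) Complex.ofReal_zero).is_zero_at_infty

@[simp] lemma stmt14.toC0_apply {X : Type*} [TopologicalSpace X] (f : C(X, ℝ))
    (hf : HasCompactSupport ⇑f) (x : X) : stmt14.toC0 f hf x = ((f x : ℝ) : ℂ) := rfl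

/-- An "almost invariant taper": a compactly supported `[0,1]`-valued continuous function
equal to `1` on `K` whose translates by elements of a symmetric finite set vary by
at most `2/N`, supported in a prescribed compact set. -/
lemma stmt14.taper {G : Type*} [Group G] {X : Type*} [TopologicalSpace X]
    [LocallyCompactSpace X] [T2Space X] [MulAction G X]
    (hcont : ∀ g : G, Continuous (fun x : X => g • x))
    (Ms : Finset G) (hsym : ∀ g ∈ Ms, g⁻¹ ∈ Ms)
    {K : Set X} (hK : IsCompact K) (N : ℕ) (hN : 0 < N) :
    ∃ (t : X → ℝ) (L : Set X), Continuous t ∧ HasCompactSupport t ∧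
      (∀ x, t x ∈ Set.Icc (0:ℝ) 1) ∧ (∀ x ∈ K, t x = 1) ∧
      (∀ g ∈ Ms, ∀ x, |t (g⁻¹ • x) - t x| ≤ 2 / N) ∧
      IsCompact L ∧ (∀ y, t y ≠ 0 → y ∈ L) := by
  classical
  have step : ∀ A : Set X, IsCompact A → ∃ B : Set X, IsCompact B ∧ A ⊆ interior B ∧
      ∀ g ∈ Ms, (fun z : X => g • z) '' A ⊆ interior B := by
    intro A hA
    have hU : IsCompact (A ∪ ⋃ g ∈ Ms, (fun z : X => g • z) '' A) :=
      hA.union (Ms.isCompact_biUnion fun g _ => hA.image (hcont g))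
    obtain ⟨B, hB, hUB⟩ := exists_compact_superset hU
    refine ⟨B, hB, Set.subset_union_left.trans hUB, fun g hg => ?_⟩
    exact (Set.subset_biUnion_of_mem hg).trans (Set.subset_union_right.trans hUB)
  choose nxt hnxt using fun (p : {A : Set X // IsCompact A}) => step p.1 p.2
  set CC : ℕ → {A : Set X // IsCompact A} :=
    fun n => Nat.rec ⟨K, hK⟩ (fun _ p => ⟨nxt p, (hnxt p).1⟩) n with hCC
  have hsub : ∀ n, (CC n).1 ⊆ interior (CC (n+1)).1 := fun n => (hnxt (CC n)).2.1
  have himg : ∀ n, ∀ g ∈ Ms, (fun z : X => g • z) '' (CC n).1 ⊆ interior (CC (n+1)).1 :=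
    fun n => (hnxt (CC n)).2.2
  have hmono : ∀ n, (CC n).1 ⊆ (CC (n+1)).1 := fun n => (hsub n).trans interior_subset
  have hmono' : ∀ {i j : ℕ}, i ≤ j → (CC i).1 ⊆ (CC j).1 := by
    intro i j hij
    induction hij with
    | refl => exact subset_rfl
    | step _ ih => exact ih.trans (hmono _)
  have hcn : ∀ n, ∃ f : C(X, ℝ), Set.EqOn f 1 (CC n).1 ∧
      Set.EqOn f 0 (interior (CC (n+1)).1)ᶜ ∧ HasCompactSupport f ∧
      ∀ x, f x ∈ Set.Icc (0:ℝ) 1 := by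
    intro n
    exact exists_continuous_one_zero_of_isCompact (CC n).2 isOpen_interior.isClosed_compl
      (Set.disjoint_left.mpr fun x hx hx' => hx' (hsub n hx))
  choose c hc1 hc0 hcCS hcIcc using hcn
  have hA0 : ∀ n x, c n x ≠ 0 → x ∈ (CC (n+1)).1 := by
    intro n x hx
    by_contra hxn
    exact hx (hc0 n fun hmem => hxn (interior_subset hmem))
  have hB2 : ∀ n, ∀ g ∈ Ms, ∀ x : X, c n x ≤ c (n+2) (g⁻¹ • x) := by
    intro n g hg x
    by_cases h0 : c n x = 0
    · rw [h0]; exact (hcIcc (n+2) (g⁻¹ • x)).1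
    · have hx1 : x ∈ (CC (n+1)).1 := hA0 n x h0
      have hx2 : g⁻¹ • x ∈ interior (CC (n+2)).1 :=
        himg (n+1) g⁻¹ (hsym g hg) ⟨x, hx1, rfl⟩
      have : c (n+2) (g⁻¹ • x) = 1 := hc1 (n+2) (interior_subset hx2)
      rw [this]; exact (hcIcc n x).2
  set t : X → ℝ := fun x => (∑ n ∈ Finset.range N, c n x) / N with ht
  have htc : Continuous t := by
    have : Continuous fun x => (∑ n ∈ Finset.range N, c n x) :=
      continuous_finset_sum _ fun n _ => (c n).continuous
    exact this.div_const _
  have hNR : (0:ℝ) < N := by exact_mod_cast hN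
  have htIcc : ∀ x, t x ∈ Set.Icc (0:ℝ) 1 := by
    intro x
    constructor
    · exact div_nonneg (Finset.sum_nonneg fun n _ => (hcIcc n x).1) hNR.le
    · rw [div_le_one hNR]
      calc ∑ n ∈ Finset.range N, c n x ≤ ∑ n ∈ Finset.range N, 1 :=
            Finset.sum_le_sum fun n _ => (hcIcc n x).2
        _ = N := by simp
  have htK : ∀ x ∈ K, t x = 1 := by
    intro x hx
    have : ∀ n ∈ Finset.range N, c n x = 1 := by
      intro n _
      exact hc1 n (hmono' (Nat.zero_le n) hx)
    simp only [ht]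
    rw [Finset.sum_congr rfl this]
    simp [hNR.ne']
  have htL : ∀ y, t y ≠ 0 → y ∈ (CC N).1 := by
    intro y hy
    by_contra hyn
    apply hy
    have : ∀ n ∈ Finset.range N, c n y = 0 := by
      intro n hn
      by_contra h0
      exact hyn (hmono' (Finset.mem_range.mp hn) (hA0 n y h0))
    simp only [ht]
    rw [Finset.sum_eq_zero this]; simp
  have htCS : HasCompactSupport t := by
    apply IsCompact.of_isClosed_subset (CC N).2 (isClosed_tsupport t)
    exact closure_minimal (fun y hy => htL y hy) (CC N).2.isClosed
  have hone : ∀ g ∈ Ms, ∀ x : X, t x ≤ t (g⁻¹ • x) + 2 / N := by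
    intro g hg x
    set y := g⁻¹ • x with hy
    have h1 : ∑ n ∈ Finset.range N, c n x ≤ ∑ n ∈ Finset.range N, c (n+2) y :=
      Finset.sum_le_sum fun n _ => hB2 n g hg x
    have e1 : ∑ n ∈ Finset.range (N+2), c n y
        = (∑ n ∈ Finset.range N, c (n+2) y) + c 1 y + c 0 y := by
      rw [Finset.sum_range_succ' (fun n => c n y) (N+1),
        Finset.sum_range_succ' (fun n => c (n+1) y) N]
    have e2 : ∑ n ∈ Finset.range (N+2), c n y
        = (∑ n ∈ Finset.range N, c n y) + c N y + c (N+1) y := by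
      rw [Finset.sum_range_succ, Finset.sum_range_succ]
    have h2 : ∑ n ∈ Finset.range N, c (n+2) y ≤ (∑ n ∈ Finset.range N, c n y) + 2 := by
      have b1 := (hcIcc N y).2
      have b2 := (hcIcc (N+1) y).2
      have b3 := (hcIcc 1 y).1
      have b4 := (hcIcc 0 y).1
      have := e1.symm.trans e2
      linarith
    have h3 := h1.trans h2
    have h4 : t x ≤ ((∑ n ∈ Finset.range N, c n y) + 2) / N := by
      simp only [ht]
      exact (div_le_div_iff_of_pos_right hNR).mpr h3
    calc t x ≤ ((∑ n ∈ Finset.range N, c n y) + 2) / N := h4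
      _ = t y + 2 / N := by rw [add_div]
  refine ⟨t, (CC N).1, htc, htCS, htIcc, htK, ?_, (CC N).2, htL⟩
  intro g hg x
  rw [abs_sub_le_iff]
  constructor
  · have := hone g⁻¹ (hsym g hg) (g⁻¹ • x)
    rw [inv_inv, smul_inv_smul] at this
    linarith
  · have := hone g hg x
    linarith

/-- Lemma 5.3: for a free action of a countable discrete group `G` on a locally
compact Hausdorff space `X`, the amenability-dimension condition for the induced
action on `C₀(X)` (condition (I)) is equivalent to the existence of systems of
almost-equivariant, orthogonal, compactly supported `[0,1]`-valued functions
summing to one on compact sets (condition (II)). -/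
theorem stmt_14 {G : Type*} [Group G] [Countable G]
    {X : Type*} [TopologicalSpace X] [LocallyCompactSpace X] [T2Space X]
    [MulAction G X] (hcont : ∀ g : G, Continuous (fun x : X => g • x))
    (hfree : ∀ (g : G) (x : X), g • x = x → g = 1) (d : ℕ) :
    (∀ ε > (0 : ℝ), ∀ M : Finset G, ∀ F : Finset C₀(X, ℂ),
        ∃ μ : Fin (d + 1) → G → C₀(X, ℂ),
          (∀ l, (Function.support (μ l)).Finite) ∧
          (∀ l g x, (μ l g x).im = 0 ∧ (μ l g x).re ∈ Set.Icc (0 : ℝ) 1) ∧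
          (∀ a ∈ F, ∀ x : X,
            ‖(∑ l : Fin (d + 1), ∑ᶠ g : G, μ l g x) * a x - a x‖ ≤ ε) ∧
          (∀ l, ∀ g h : G, g ≠ h → ∀ x : X, μ l g x * μ l h x = 0) ∧
          (∀ a ∈ F, ∀ l, ∀ g ∈ M, ∀ E : Finset G, ∀ x : X,
            ‖(∑ h ∈ E, (μ l h (g⁻¹ • x) - μ l (g * h) x)) * a x‖ ≤ ε) ∧
          (∀ a ∈ F, ∀ l, ∀ E : Finset G, ∀ x : X,
            ‖(∑ g ∈ E, μ l g x) * a x - a x * (∑ g ∈ E, μ l g x)‖ ≤ ε)) ↔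
      (∀ ε > (0 : ℝ), ∀ M : Finset G, ∀ K : Set X, IsCompact K →
        ∃ μ : Fin (d + 1) → G → C(X, ℝ),
          (∀ l, (Function.support (μ l)).Finite) ∧
          (∀ l g, HasCompactSupport ⇑(μ l g)) ∧
          (∀ l g x, μ l g x ∈ Set.Icc (0 : ℝ) 1) ∧
          (∀ x : X, (∑ l : Fin (d + 1), ∑ᶠ g : G, μ l g x) ≤ 1) ∧
          (∀ x ∈ K, (∑ l : Fin (d + 1), ∑ᶠ g : G, μ l g x) = 1) ∧
          (∀ l, ∀ g h : G, g ≠ h → ∀ x : X, μ l g x * μ l h x = 0) ∧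
          (∀ l, ∀ g ∈ M, ∀ h : G, ∀ x : X,
            |μ l h (g⁻¹ • x) - μ l (g * h) x| ≤ ε)) := by
  classical
  constructor
  · -- (I) → (II)
    intro hI ε hε M K hK
    set Ms : Finset G := M ∪ M.image (·⁻¹) with hMs
    have hsym : ∀ g ∈ Ms, g⁻¹ ∈ Ms := by
      intro g hg
      simp only [hMs, Finset.mem_union, Finset.mem_image] at hg ⊢
      rcases hg with hg | ⟨h, hh, rfl⟩
      · exact Or.inr ⟨g, hg, rfl⟩
      · exact Or.inl (by simpa using hh)
    have hMsub : ∀ g ∈ M, g ∈ Ms := fun g hg => Finset.mem_union_left _ hg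
    set N : ℕ := max 1 ⌈4 / ε⌉₊ with hNdef
    have hN0 : 0 < N := lt_of_lt_of_le one_pos (le_max_left _ _)
    have hNR : (0:ℝ) < N := by exact_mod_cast hN0
    have hN2 : 2 / (N:ℝ) ≤ ε / 2 := by
      have h4 : 4 / ε ≤ (N:ℝ) := le_trans (Nat.le_ceil _) (by exact_mod_cast le_max_right 1 _)
      have h5 : 4 ≤ (N:ℝ) * ε := (div_le_iff₀ hε).mp h4
      rw [div_le_div_iff₀ hNR two_pos]
      nlinarith
    set δ : ℝ := min (1/2) (ε / (4 * ((d:ℝ) + 2))) with hδdef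
    have hd2 : (0:ℝ) < 4 * ((d:ℝ) + 2) := by positivity
    have hδpos : 0 < δ := lt_min (by norm_num) (div_pos hε hd2)
    have hδhalf : δ ≤ 1/2 := min_le_left _ _
    have hδ2 : 2 * ((d:ℝ) + 2) * δ ≤ ε / 2 := by
      have h1 : δ ≤ ε / (4 * ((d:ℝ)+2)) := min_le_right _ _
      have hd2' : ((d:ℝ)+2) ≠ 0 := by positivity
      calc 2 * ((d:ℝ)+2) * δ ≤ 2*((d:ℝ)+2) * (ε / (4*((d:ℝ)+2))) := by
            apply mul_le_mul_of_nonneg_left h1 (by positivity)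
        _ = ε / 2 := by field_simp; ring
    have h1δ : (1:ℝ)/2 ≤ 1 - δ := by linarith
    obtain ⟨t, L, htc, htCS, htIcc, htK, htinv, hLc, htL⟩ :=
      stmt14.taper hcont Ms hsym hK N hN0
    obtain ⟨a, haL, -, haCS, haIcc⟩ :=
      exists_continuous_one_zero_of_isCompact hLc isClosed_empty (Set.disjoint_empty L)
    set aC : C₀(X, ℂ) := stmt14.toC0 a haCS with haCdef
    have haC1 : ∀ y ∈ L, aC y = 1 := by
      intro y hy
      have : a y = 1 := haL hy
      simp [haCdef, stmt14.toC0_apply, this]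
    have htA : ∀ y, t y ≠ 0 → aC y = 1 := fun y hy => haC1 y (htL y hy)
    obtain ⟨μ, hsupp, hval, hAc, horth, hc, -⟩ := hI δ hδpos Ms {aC}
    have haCmem : aC ∈ ({aC} : Finset C₀(X,ℂ)) := Finset.mem_singleton_self aC
    have hfinS : (⋃ l, Function.support (μ l)).Finite := Set.finite_iUnion hsupp
    set S : Finset G := hfinS.toFinset with hSdef
    have hS : ∀ l g, μ l g ≠ 0 → g ∈ S := by
      intro l g hg
      simp only [hSdef, Set.Finite.mem_toFinset, Set.mem_iUnion]
      exact ⟨l, hg⟩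
    have hS0 : ∀ (l : Fin (d+1)) (g : G), g ∉ S → μ l g = 0 := by
      intro l g hg; by_contra h0; exact hg (hS l g h0)
    set ν₀ : Fin (d+1) → G → X → ℝ := fun l g x => (μ l g x).re with hν₀def
    have hν₀Icc : ∀ l g x, ν₀ l g x ∈ Set.Icc (0:ℝ) 1 := fun l g x => (hval l g x).2
    have hreal : ∀ l g x, μ l g x = ((ν₀ l g x : ℝ) : ℂ) := by
      intro l g x
      apply Complex.ext
      · simp [hν₀def]
      · simp [(hval l g x).1]
    have hν₀cont : ∀ l g, Continuous (ν₀ l g) :=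
      fun l g => Complex.continuous_re.comp (map_continuous (μ l g))
    set s : X → ℝ := fun x => ∑ l : Fin (d+1), ∑ g ∈ S, ν₀ l g x with hsdef
    have hscont : Continuous s := by
      apply continuous_finset_sum
      intro l _
      exact continuous_finset_sum _ fun g _ => hν₀cont l g
    have hs0 : ∀ x, 0 ≤ s x := fun x => Finset.sum_nonneg fun l _ =>
      Finset.sum_nonneg fun g _ => (hν₀Icc l g x).1
    have hν₀z : ∀ (l : Fin (d+1)) (g : G) (x : X), g ∉ S → ν₀ l g x = 0 := by
      intro l g x hg
      simp [hν₀def, hS0 l g hg]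
    have hsge : ∀ (l : Fin (d+1)) (g : G) (x : X), ν₀ l g x ≤ s x := by
      intro l g x
      by_cases hgS : g ∈ S
      · calc ν₀ l g x ≤ ∑ g' ∈ S, ν₀ l g' x :=
              Finset.single_le_sum (fun g' _ => (hν₀Icc l g' x).1) hgS
          _ ≤ s x := Finset.single_le_sum
              (fun l' (_ : l' ∈ Finset.univ) =>
                Finset.sum_nonneg fun g' _ => (hν₀Icc l' g' x).1)
              (Finset.mem_univ l)
      · rw [hν₀z l g x hgS]; exact hs0 x
    set m : X → ℝ := fun x => max (s x) (1 - δ) with hmdef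
    have hm_ge : ∀ x, 1 - δ ≤ m x := fun x => le_max_right _ _
    have hm_half : ∀ x, 1/2 ≤ m x := fun x => le_trans h1δ (hm_ge x)
    have hm_pos : ∀ x, 0 < m x := fun x => lt_of_lt_of_le (by norm_num) (hm_half x)
    have hsm : ∀ x, s x ≤ m x := fun x => le_max_left _ _
    have hmcont : Continuous m := hscont.max continuous_const
    have hμfin : ∀ (l : Fin (d+1)) (x : X), (∑ᶠ g, μ l g x) = ∑ g ∈ S, μ l g x := by
      intro l x
      apply finsum_eq_sum_of_support_subset
      intro g hg
      simp only [Function.mem_support] at hg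
      apply hS l g
      intro h0
      rw [h0] at hg
      simp at hg
    have hsK : ∀ x ∈ K, 1 - δ ≤ s x := by
      intro x hx
      have hxL : x ∈ L := htL x (by rw [htK x hx]; norm_num)
      have h1 := hAc aC haCmem x
      rw [haC1 x hxL, mul_one] at h1
      have h2 : (∑ l : Fin (d+1), ∑ᶠ g, μ l g x) = ((s x : ℝ) : ℂ) := by
        calc (∑ l : Fin (d+1), ∑ᶠ g, μ l g x)
            = ∑ l : Fin (d+1), ∑ g ∈ S, μ l g x :=
              Finset.sum_congr rfl fun l _ => hμfin l x
          _ = ((s x : ℝ) : ℂ) := by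
              simp only [hsdef]
              push_cast
              exact Finset.sum_congr rfl fun l _ =>
                Finset.sum_congr rfl fun g _ => hreal l g x
      rw [h2] at h1
      have h3 : ‖((s x - 1 : ℝ) : ℂ)‖ ≤ δ := by
        convert h1 using 2
        push_cast; ring
      rw [Complex.norm_real, Real.norm_eq_abs, abs_le] at h3
      linarith [h3.1]
    have hkey : ∀ (l : Fin (d+1)) (g : G), g ∈ Ms → ∀ (h : G) (x : X), aC (g⁻¹ • x) = 1 →
        |ν₀ l (g * h) x - ν₀ l h (g⁻¹ • x)| ≤ δ := by
      intro l g hg h x hax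
      have h1 := hc aC haCmem l g⁻¹ (hsym g hg) {g * h} (g⁻¹ • x)
      rw [Finset.sum_singleton, inv_inv, smul_inv_smul, inv_mul_cancel_left, hax, mul_one] at h1
      have h2 : μ l (g*h) x - μ l h (g⁻¹ • x)
          = ((ν₀ l (g*h) x - ν₀ l h (g⁻¹ • x) : ℝ) : ℂ) := by
        rw [hreal, hreal]; push_cast; ring
      rwa [h2, Complex.norm_real, Real.norm_eq_abs] at h1
    have hskey : ∀ (g : G), g ∈ Ms → ∀ x : X, aC (g⁻¹ • x) = 1 →
        |s (g⁻¹ • x) - s x| ≤ ((d:ℝ) + 1) * δ := by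
      intro g hg x hax
      set E : Finset G := S ∪ S.image (fun k => g * k) with hEdef
      have hSE : S ⊆ E := Finset.subset_union_left
      have hper : ∀ l : Fin (d+1),
          |(∑ k ∈ S, ν₀ l k x) - ∑ k ∈ S, ν₀ l k (g⁻¹ • x)| ≤ δ := by
        intro l
        have h1 := hc aC haCmem l g⁻¹ (hsym g hg) E (g⁻¹ • x)
        rw [hax, mul_one] at h1
        have h2 : (∑ k ∈ E, (μ l k ((g⁻¹)⁻¹ • (g⁻¹ • x)) - μ l (g⁻¹ * k) (g⁻¹ • x)))
            = (((∑ k ∈ E, ν₀ l k x) - ∑ k ∈ E, ν₀ l (g⁻¹ * k) (g⁻¹ • x) : ℝ) : ℂ) := by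
          push_cast
          rw [Finset.sum_sub_distrib]
          congr 1
          · exact Finset.sum_congr rfl fun k _ => by
              rw [inv_inv, smul_inv_smul, hreal]
          · exact Finset.sum_congr rfl fun k _ => by rw [hreal]
        rw [h2, Complex.norm_real, Real.norm_eq_abs] at h1
        have e1 : ∑ k ∈ E, ν₀ l k x = ∑ k ∈ S, ν₀ l k x := by
          symm
          apply Finset.sum_subset hSE
          intro k _ hkS
          exact hν₀z l k x hkS
        have e2 : ∑ k ∈ E, ν₀ l (g⁻¹ * k) (g⁻¹ • x) = ∑ k ∈ S, ν₀ l k (g⁻¹ • x) := by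
          have hinj : ∀ k ∈ E, ∀ k' ∈ E, g⁻¹ * k = g⁻¹ * k' → k = k' :=
            fun k _ k' _ hkk => mul_left_cancel hkk
          have himg : ∑ j ∈ E.image (fun k => g⁻¹ * k), ν₀ l j (g⁻¹ • x)
              = ∑ k ∈ E, ν₀ l (g⁻¹ * k) (g⁻¹ • x) := Finset.sum_image hinj
          rw [← himg]
          symm
          apply Finset.sum_subset
          · intro j hjS
            refine Finset.mem_image.mpr ⟨g * j, ?_, by group⟩
            exact Finset.mem_union_right _ (Finset.mem_image.mpr ⟨j, hjS, rfl⟩)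
          · intro j _ hjS
            exact hν₀z l j (g⁻¹ • x) hjS
        rw [e1, e2] at h1
        exact h1
      have hsplit : s x - s (g⁻¹ • x) = ∑ l : Fin (d+1),
          ((∑ k ∈ S, ν₀ l k x) - ∑ k ∈ S, ν₀ l k (g⁻¹ • x)) := by
        simp only [hsdef]
        rw [Finset.sum_sub_distrib]
      rw [abs_sub_comm, hsplit]
      calc |∑ l : Fin (d+1), ((∑ k ∈ S, ν₀ l k x) - ∑ k ∈ S, ν₀ l k (g⁻¹ • x))|
          ≤ ∑ l : Fin (d+1), |(∑ k ∈ S, ν₀ l k x) - ∑ k ∈ S, ν₀ l k (g⁻¹ • x)| :=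
            Finset.abs_sum_le_sum_abs _ _
        _ ≤ ∑ _l : Fin (d+1), δ := Finset.sum_le_sum fun l _ => hper l
        _ = ((d:ℝ)+1) * δ := by
            rw [Finset.sum_const, Finset.card_univ, Fintype.card_fin, nsmul_eq_mul]
            push_cast; ring
    have hνcont : ∀ (l : Fin (d+1)) (g : G), Continuous fun x => t x * (ν₀ l g x / m x) :=
      fun l g => htc.mul ((hν₀cont l g).div hmcont fun x => (hm_pos x).ne')
    set ν : Fin (d+1) → G → C(X, ℝ) :=
      fun l g => ⟨fun x => t x * (ν₀ l g x / m x), hνcont l g⟩ with hνdef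
    have hνapp : ∀ l g x, ν l g x = t x * (ν₀ l g x / m x) := fun l g x => rfl
    have hνfin : ∀ (l : Fin (d+1)) (x : X), (∑ᶠ g, ν l g x) = ∑ g ∈ S, ν l g x := by
      intro l x
      apply finsum_eq_sum_of_support_subset
      intro g hg
      simp only [Function.mem_support] at hg
      apply hS l g
      intro h0
      apply hg
      have hz : ν₀ l g x = 0 := by simp [hν₀def, h0]
      rw [hνapp, hz]
      simp
    have hνsum : ∀ x, (∑ l : Fin (d+1), ∑ᶠ g, ν l g x) = t x * (s x / m x) := by
      intro x
      calc (∑ l : Fin (d+1), ∑ᶠ g, ν l g x)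
          = ∑ l : Fin (d+1), ∑ g ∈ S, ν l g x :=
            Finset.sum_congr rfl fun l _ => hνfin l x
        _ = t x * ((∑ l : Fin (d+1), ∑ g ∈ S, ν₀ l g x) / m x) := by
            rw [Finset.sum_div, Finset.mul_sum]
            apply Finset.sum_congr rfl
            intro l _
            rw [Finset.sum_div, Finset.mul_sum]
            apply Finset.sum_congr rfl
            intro g _
            rw [hνapp]
        _ = t x * (s x / m x) := by rw [hsdef]
    refine ⟨ν, ?_, ?_, ?_, ?_, ?_, ?_, ?_⟩
    · intro l
      apply (hsupp l).subset
      intro g hg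
      simp only [Function.mem_support] at hg ⊢
      intro h0
      apply hg
      ext x
      rw [hνapp]
      have : ν₀ l g x = 0 := by simp [hν₀def, h0]
      rw [this]
      simp
    · intro l g
      apply htCS.mono
      intro x hx
      simp only [Function.mem_support] at hx ⊢
      intro ht0
      apply hx
      rw [hνapp, ht0, zero_mul]
    · intro l g x
      constructor
      · exact mul_nonneg (htIcc x).1 (div_nonneg (hν₀Icc l g x).1 (hm_pos x).le)
      · have hdle : ν₀ l g x / m x ≤ 1 := by
          rw [div_le_one (hm_pos x)]
          exact (hsge l g x).trans (hsm x)
        calc ν l g x = t x * (ν₀ l g x / m x) := hνapp l g x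
          _ ≤ 1 * 1 := mul_le_mul (htIcc x).2 hdle
                (div_nonneg (hν₀Icc l g x).1 (hm_pos x).le) one_pos.le
          _ = 1 := by norm_num
    · intro x
      rw [hνsum x]
      have h1 : s x / m x ≤ 1 := by rw [div_le_one (hm_pos x)]; exact hsm x
      have h0 : 0 ≤ s x / m x := div_nonneg (hs0 x) (hm_pos x).le
      calc t x * (s x / m x) ≤ 1 * 1 := mul_le_mul (htIcc x).2 h1 h0 one_pos.le
        _ = 1 := by norm_num
    · intro x hx
      rw [hνsum x, htK x hx, one_mul]
      have h1 : 1 - δ ≤ s x := hsK x hx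
      have hms : m x = s x := max_eq_left h1
      rw [hms]
      exact div_self (by linarith : s x ≠ 0)
    · intro l g h hgh x
      have h0 : ν₀ l g x * ν₀ l h x = 0 := by
        have hz := horth l g h hgh x
        rw [hreal l g x, hreal l h x, ← Complex.ofReal_mul] at hz
        exact_mod_cast hz
      rw [hνapp, hνapp]
      calc t x * (ν₀ l g x / m x) * (t x * (ν₀ l h x / m x))
          = (ν₀ l g x * ν₀ l h x) * (t x * t x) / (m x * m x) := by ring
        _ = 0 := by rw [h0]; ring
    · intro l g hg h x
      have hgMs := hMsub g hg
      rw [hνapp, hνapp]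
      set y := g⁻¹ • x with hy
      have htxy : |t y - t x| ≤ 2 / N := htinv g hgMs x
      by_cases ht0 : t y = 0
      · rw [ht0, zero_mul]
        have hv0 : 0 ≤ ν₀ l (g*h) x / m x := div_nonneg (hν₀Icc _ _ _).1 (hm_pos x).le
        have hv1 : ν₀ l (g*h) x / m x ≤ 1 := by
          rw [div_le_one (hm_pos x)]; exact (hsge _ _ _).trans (hsm x)
        have htx2 : t x ≤ 2 / N := by
          rw [ht0] at htxy
          have := abs_le.mp htxy
          linarith [this.1]
        rw [zero_sub, abs_neg, abs_of_nonneg (mul_nonneg (htIcc x).1 hv0)]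
        calc t x * (ν₀ l (g*h) x / m x) ≤ t x * 1 :=
              mul_le_mul_of_nonneg_left hv1 (htIcc x).1
          _ = t x := mul_one _
          _ ≤ 2 / N := htx2
          _ ≤ ε / 2 := hN2
          _ ≤ ε := by linarith
      · have hay : aC y = 1 := htA y ht0
        have e1 : |ν₀ l (g*h) x - ν₀ l h y| ≤ δ := hkey l g hgMs h x hay
        have e2 : |s y - s x| ≤ ((d:ℝ)+1) * δ := hskey g hgMs x hay
        have e2' : |m y - m x| ≤ ((d:ℝ)+1) * δ :=
          (abs_max_sub_max_le_abs (s y) (s x) (1 - δ)).trans e2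
        have hmy := hm_pos y
        have hmx := hm_pos x
        have hq : ν₀ l h y / m y - ν₀ l (g*h) x / m x
            = (ν₀ l h y * m x - m y * ν₀ l (g*h) x) / (m y * m x) :=
          div_sub_div _ _ hmy.ne' hmx.ne'
        have hnum : |ν₀ l h y * m x - m y * ν₀ l (g*h) x|
            ≤ 2*((d:ℝ)+2)*δ*(m y * m x) := by
          have he1 := abs_le.mp e1
          have he2 := abs_le.mp e2'
          have hw2m : ν₀ l (g*h) x ≤ m x := (hsge _ _ _).trans (hsm x)
          have hw2p : (0:ℝ) ≤ ν₀ l (g*h) x := (hν₀Icc _ _ _).1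
          have hm1h : (1:ℝ)/2 ≤ m y := hm_half y
          have hDp : (0:ℝ) ≤ ((d:ℝ)+1)*δ := by positivity
          rw [abs_le]
          constructor
          · nlinarith [mul_le_mul_of_nonneg_right
                (by linarith [he1.2] : ν₀ l (g*h) x - ν₀ l h y ≤ δ) hmx.le,
              mul_le_mul_of_nonneg_left
                (by linarith [he2.2] : m y - m x ≤ ((d:ℝ)+1)*δ) hw2p,
              mul_le_mul_of_nonneg_right hw2m hDp,
              mul_nonneg (mul_nonneg (by linarith : (0:ℝ) ≤ 2*(m y) - 1) hmx.le)
                (by positivity : (0:ℝ) ≤ ((d:ℝ)+2)*δ)]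
          · nlinarith [mul_le_mul_of_nonneg_right
                (by linarith [he1.1] : ν₀ l h y - ν₀ l (g*h) x ≤ δ) hmx.le,
              mul_le_mul_of_nonneg_left
                (by linarith [he2.1] : m x - m y ≤ ((d:ℝ)+1)*δ) hw2p,
              mul_le_mul_of_nonneg_right hw2m hDp,
              mul_nonneg (mul_nonneg (by linarith : (0:ℝ) ≤ 2*(m y) - 1) hmx.le)
                (by positivity : (0:ℝ) ≤ ((d:ℝ)+2)*δ)]
        have huv : |ν₀ l h y / m y - ν₀ l (g*h) x / m x| ≤ 2*((d:ℝ)+2)*δ := by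
          rw [hq, abs_div, abs_of_pos (mul_pos hmy hmx), div_le_iff₀ (mul_pos hmy hmx)]
          exact hnum
        have hdec : t y * (ν₀ l h y / m y) - t x * (ν₀ l (g*h) x / m x)
            = t y * (ν₀ l h y / m y - ν₀ l (g*h) x / m x)
              + (t y - t x) * (ν₀ l (g*h) x / m x) := by ring
        have hv0 : 0 ≤ ν₀ l (g*h) x / m x := div_nonneg (hν₀Icc _ _ _).1 hmx.le
        have hv1 : ν₀ l (g*h) x / m x ≤ 1 := by
          rw [div_le_one hmx]; exact (hsge _ _ _).trans (hsm x)
        calc |t y * (ν₀ l h y / m y) - t x * (ν₀ l (g*h) x / m x)|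
            ≤ |t y * (ν₀ l h y / m y - ν₀ l (g*h) x / m x)|
              + |(t y - t x) * (ν₀ l (g*h) x / m x)| := by
                rw [hdec]; exact abs_add_le _ _
          _ = |t y| * |ν₀ l h y / m y - ν₀ l (g*h) x / m x|
              + |t y - t x| * |ν₀ l (g*h) x / m x| := by rw [abs_mul, abs_mul]
          _ ≤ 1 * (2*((d:ℝ)+2)*δ) + (2/N) * 1 := by
              apply add_le_add
              · apply mul_le_mul _ huv (abs_nonneg _) one_pos.le
                rw [abs_of_nonneg (htIcc y).1]; exact (htIcc y).2
              · apply mul_le_mul htxy _ (abs_nonneg _) (by positivity)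
                rw [abs_of_nonneg hv0]; exact hv1
          _ = 2*((d:ℝ)+2)*δ + 2/N := by ring
          _ ≤ ε/2 + ε/2 := add_le_add hδ2 hN2
          _ = ε := by ring
  · -- (II) → (I)
    intro hII ε hε M F
    set C : ℝ := 1 + ∑ a ∈ F, ‖a‖ with hCdef
    have hC1 : (1:ℝ) ≤ C := by
      have : (0:ℝ) ≤ ∑ a ∈ F, ‖a‖ := Finset.sum_nonneg fun a _ => norm_nonneg a
      simp only [hCdef]; linarith
    have hCpos : (0:ℝ) < C := lt_of_lt_of_le one_pos hC1
    have hCa : ∀ a ∈ F, ∀ x : X, ‖a x‖ ≤ C := by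
      intro a ha x
      have h1 : ‖a x‖ ≤ ‖a‖ := by
        rw [← ZeroAtInftyContinuousMap.norm_toBCF_eq_norm]
        exact BoundedContinuousFunction.norm_coe_le_norm a.toBCF x
      have h2 : ‖a‖ ≤ ∑ b ∈ F, ‖b‖ := Finset.single_le_sum (fun b _ => norm_nonneg b) ha
      simp only [hCdef]; linarith
    set η : ℝ := ε / C with hηdef
    have hη : 0 < η := div_pos hε hCpos
    have hKa : ∀ a : C₀(X, ℂ), IsCompact {x : X | ε ≤ ‖a x‖} := by
      intro a
      have htd : Filter.Tendsto a (Filter.cocompact X) (nhds 0) := zero_at_infty a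
      have hev : {x : X | ‖a x‖ < ε} ∈ Filter.cocompact X := by
        have := Metric.tendsto_nhds.mp htd ε hε
        have h' : ∀ᶠ x in Filter.cocompact X, ‖a x‖ < ε := by simpa [dist_zero_right] using this
        exact h'
      obtain ⟨S, hS, hSsub⟩ := Filter.mem_cocompact.mp hev
      apply hS.of_isClosed_subset
      · exact isClosed_le continuous_const (continuous_norm.comp (map_continuous a))
      · intro x hx
        by_contra hxS
        have : ‖a x‖ < ε := hSsub hxS
        exact absurd hx.out (not_le.mpr this)
    set K : Set X := ⋃ a ∈ F, {x : X | ε ≤ ‖a x‖} with hKdef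
    have hKc : IsCompact K := F.isCompact_biUnion fun a _ => hKa a
    obtain ⟨ν, hsupp, hCS, hIcc, hle, hKone, horth, hinv⟩ := hII η hη M K hKc
    have hfinT : (⋃ l, Function.support (ν l)).Finite := Set.finite_iUnion hsupp
    set T : Finset G := hfinT.toFinset with hTdef
    have hT : ∀ l g, ν l g ≠ 0 → g ∈ T := by
      intro l g hg
      simp only [hTdef, Set.Finite.mem_toFinset, Set.mem_iUnion]
      exact ⟨l, hg⟩
    have hnz : ∀ (l : Fin (d+1)) (g : G) (x : X), ν l g x ≠ 0 → ν l g ≠ 0 := by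
      intro l g x hx h0; rw [h0] at hx; simp at hx
    have hfsν : ∀ (l : Fin (d+1)) (y : X), (∑ᶠ g, ν l g y) = ∑ g ∈ T, ν l g y := by
      intro l y
      apply finsum_eq_sum_of_support_subset
      intro g hg
      exact hT l g (hnz l g y hg)
    refine ⟨fun l g => stmt14.toC0 (ν l g) (hCS l g), ?_, ?_, ?_, ?_, ?_, ?_⟩
    · intro l
      apply (hsupp l).subset
      intro g hg
      simp only [Function.mem_support] at hg ⊢
      intro h0
      apply hg
      ext x
      simp [stmt14.toC0_apply, h0]
    · intro l g x
      refine ⟨by simp, ?_⟩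
      simpa using hIcc l g x
    · intro a haF x
      have hfs : ∀ l : Fin (d+1), (∑ᶠ g, stmt14.toC0 (ν l g) (hCS l g) x)
          = ((∑ g ∈ T, ν l g x : ℝ) : ℂ) := by
        intro l
        rw [finsum_eq_sum_of_support_subset _ (s := T) ?_]
        · push_cast; rfl
        · intro g hg
          simp only [Function.mem_support, stmt14.toC0_apply] at hg
          have : ν l g x ≠ 0 := by exact_mod_cast hg
          exact hT l g (hnz l g x this)
      set σ : ℝ := ∑ l : Fin (d+1), ∑ g ∈ T, ν l g x with hσdef
      have hZ : (∑ l : Fin (d+1), ∑ᶠ g, stmt14.toC0 (ν l g) (hCS l g) x) = ((σ : ℝ) : ℂ) := by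
        calc (∑ l : Fin (d+1), ∑ᶠ g, stmt14.toC0 (ν l g) (hCS l g) x)
            = ∑ l : Fin (d+1), ((∑ g ∈ T, ν l g x : ℝ) : ℂ) :=
              Finset.sum_congr rfl fun l _ => hfs l
          _ = ((σ : ℝ) : ℂ) := by rw [hσdef]; push_cast; ring
      have hσeq : σ = ∑ l : Fin (d+1), ∑ᶠ g, ν l g x :=
        (Finset.sum_congr rfl fun l _ => (hfsν l x).symm)
      have hσ1 : σ ≤ 1 := by rw [hσeq]; exact hle x
      have hσ0 : 0 ≤ σ :=
        Finset.sum_nonneg fun l _ => Finset.sum_nonneg fun g _ => (hIcc l g x).1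
      rw [hZ]
      have hfac : ((σ:ℝ):ℂ) * a x - a x = ((σ - 1 : ℝ) : ℂ) * a x := by push_cast; ring
      rw [hfac, norm_mul, Complex.norm_real, Real.norm_eq_abs]
      by_cases hx : x ∈ K
      · have : σ = 1 := by rw [hσeq]; exact hKone x hx
        rw [this]; simp [hε.le]
      · have hax : ‖a x‖ < ε := by
          by_contra hcon
          exact hx (Set.mem_biUnion haF (by simpa using le_of_not_gt hcon))
        have h1 : |σ - 1| ≤ 1 := by rw [abs_le]; constructor <;> linarith
        calc |σ - 1| * ‖a x‖ ≤ 1 * ε :=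
              mul_le_mul h1 hax.le (norm_nonneg _) one_pos.le
          _ = ε := one_mul ε
    · intro l g h hgh x
      have := horth l g h hgh x
      simp only [stmt14.toC0_apply]
      rw [← Complex.ofReal_mul, this, Complex.ofReal_zero]
    · intro a haF l g hgM E x
      have hsum : (∑ h ∈ E, (stmt14.toC0 (ν l h) (hCS l h) (g⁻¹ • x)
            - stmt14.toC0 (ν l (g*h)) (hCS l (g*h)) x))
          = ((∑ h ∈ E, (ν l h (g⁻¹ • x) - ν l (g*h) x) : ℝ) : ℂ) := by
        simp only [stmt14.toC0_apply]
        push_cast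
        rfl
      rw [hsum, norm_mul, Complex.norm_real, Real.norm_eq_abs]
      set R : ℝ := ∑ h ∈ E, (ν l h (g⁻¹ • x) - ν l (g*h) x) with hRdef
      have hRsplit : R = (∑ h ∈ E, ν l h (g⁻¹ • x)) - ∑ h ∈ E, ν l (g*h) x :=
        Finset.sum_sub_distrib _ _
      have key : ∀ (z : X) (j : G → G), Function.Injective j →
          ((∑ h ∈ E, ν l (j h) z) = 0 ∧ ∀ h ∈ E, ν l (j h) z = 0) ∨
          ∃ h₀ ∈ E, (∑ h ∈ E, ν l (j h) z) = ν l (j h₀) z ∧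
            ∀ h ∈ E, h ≠ h₀ → ν l (j h) z = 0 := by
        intro z j hj
        by_cases hall : ∀ h ∈ E, ν l (j h) z = 0
        · exact Or.inl ⟨Finset.sum_eq_zero hall, hall⟩
        · push_neg at hall
          obtain ⟨h₀, hh₀E, hh₀⟩ := hall
          have hzero : ∀ h ∈ E, h ≠ h₀ → ν l (j h) z = 0 := by
            intro h hE hne
            have hprod := horth l (j h) (j h₀) (fun hcc => hne (hj hcc)) z
            rcases mul_eq_zero.mp hprod with h1 | h1
            · exact h1
            · exact absurd h1 hh₀
          exact Or.inr ⟨h₀, hh₀E,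
            Finset.sum_eq_single_of_mem h₀ hh₀E (fun b hb hbn => hzero b hb hbn), hzero⟩
      have hU := key (g⁻¹ • x) id Function.injective_id
      have hV := key x (fun h => g * h) (mul_right_injective g)
      simp only [id] at hU
      have hRb : |R| ≤ η := by
        rw [hRsplit]
        rcases hU with ⟨hU0, hUall⟩ | ⟨h₀, hh₀E, hUeq, hUz⟩ <;>
          rcases hV with ⟨hV0, hVall⟩ | ⟨h₁, hh₁E, hVeq, hVz⟩
        · rw [hU0, hV0]; simpa using hη.le
        · rw [hU0, hVeq]
          have h2 := hinv l g hgM h₁ x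
          rw [hUall h₁ hh₁E] at h2
          simpa using h2
        · rw [hUeq, hV0]
          have h2 := hinv l g hgM h₀ x
          rw [hVall h₀ hh₀E] at h2
          simpa using h2
        · by_cases hee : h₀ = h₁
          · rw [hUeq, hVeq, ← hee]
            exact hinv l g hgM h₀ x
          · have hz1 : ν l (g * h₀) x = 0 := hVz h₀ hh₀E hee
            have hz2 : ν l h₁ (g⁻¹ • x) = 0 := hUz h₁ hh₁E (Ne.symm hee)
            have e1 := hinv l g hgM h₀ x
            rw [hz1] at e1
            have e2 := hinv l g hgM h₁ x
            rw [hz2] at e2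
            rw [hUeq, hVeq]
            have p1 : 0 ≤ ν l h₀ (g⁻¹ • x) := (hIcc _ _ _).1
            have p2 : 0 ≤ ν l (g * h₁) x := (hIcc _ _ _).1
            rw [sub_zero] at e1
            rw [zero_sub, abs_neg] at e2
            rw [abs_of_nonneg p1] at e1
            rw [abs_of_nonneg p2] at e2
            rw [abs_le]
            constructor <;> linarith
      have haxC : ‖a x‖ ≤ C := hCa a haF x
      calc |R| * ‖a x‖ ≤ η * C := mul_le_mul hRb haxC (norm_nonneg _) hη.le
        _ = ε := div_mul_cancel₀ ε hCpos.ne'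
    · intro a haF l E x
      have h0 : (∑ g ∈ E, stmt14.toC0 (ν l g) (hCS l g) x) * a x
          - a x * (∑ g ∈ E, stmt14.toC0 (ν l g) (hCS l g) x) = 0 := by ring
      rw [h0, norm_zero]; exact hε.le
end

section
/- Let G be a countable discrete group, X a compact Hausdorff space, α : G ↷ X a free action by homeomorphisms, and d ∈ ℕ. Suppose that for every ε > 0 and every finite subset M ⊆ G there exist finitely supported maps μ^{(l)} : G → C(X,[0,1]) for l = 0,…,d satisfying: (a) ∑_{l=0}^{d} ∑_{g∈G} μ^{(l)}_g(x) = 1 for every x ∈ X; (b) μ^{(l)}_g · μ^{(l)}_h = 0 for every l and all g ≠ h in G; (c) ‖μ^{(l)}_h ∘ α_{g⁻¹} − μ^{(l)}_{g·h}‖_∞ ≤ ε for every l, every g ∈ M and every h ∈ G. Then for every finite subset M ⊆ G there exist families 𝒰^{(0)}, …, 𝒰^{(d)} of open subsets of G × X (G carrying the discrete topology and G × X the product topology) such that, with Δ denoting the diagonal G-action Δ_g(h,x) = (h·g⁻¹, α_g(x)): (i) the union 𝒰 = 𝒰^{(0)} ∪ … ∪ 𝒰^{(d)} covers G × X; (ii)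 each family 𝒰^{(l)} is Δ-invariant (U ∈ 𝒰^{(l)} implies Δ_g(U) ∈ 𝒰^{(l)} for all g ∈ G) and its members are pairwise disjoint; in particular U ∩ Δ_g(U) = ∅ for every U ∈ 𝒰 and every g ≠ 1, so 𝒰 is a free G-cover of multiplicity at most d+1; (iii) for every h ∈ G and x ∈ X the set {(b·h, x) : b ∈ M} is contained in some member of 𝒰. -/
/-- Implication (3) ⇒ (1) of Lemma 6.3: almost-equivariant orthogonal partitions
of unity for a free action on a compact Hausdorff space yield, for each finite
`M ⊆ G`, a free `G`-cover of `G × X` (for the diagonal action) consisting of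
`d+1` invariant disjoint families, each `M × {x}` translate being contained in a
member of the cover. -/
theorem stmt_15 {G : Type*} [Group G] [Countable G]
    [TopologicalSpace G] [DiscreteTopology G]
    {X : Type*} [TopologicalSpace X] [CompactSpace X] [T2Space X]
    [MulAction G X] (hcont : ∀ g : G, Continuous (fun x : X => g • x))
    (hfree : ∀ (g : G) (x : X), g • x = x → g = 1) (d : ℕ)
    (hyp : ∀ ε > (0 : ℝ), ∀ M : Finset G, ∃ μ : Fin (d + 1) → G → C(X, ℝ),
        (∀ l, (Function.support (μ l)).Finite) ∧
        (∀ l g x, μ l g x ∈ Set.Icc (0 : ℝ) 1) ∧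
        (∀ x : X, ∑ l : Fin (d + 1), ∑ᶠ g : G, μ l g x = 1) ∧
        (∀ l, ∀ g h : G, g ≠ h → ∀ x : X, μ l g x * μ l h x = 0) ∧
        (∀ l, ∀ g ∈ M, ∀ h : G, ∀ x : X,
          |μ l h (g⁻¹ • x) - μ l (g * h) x| ≤ ε)) :
    ∀ M : Finset G, ∃ U : Fin (d + 1) → Set (Set (G × X)),
      (∀ l, ∀ A ∈ U l, IsOpen A) ∧
      (⋃ l, ⋃₀ U l) = Set.univ ∧
      (∀ l, ∀ A ∈ U l, ∀ g : G,
        (fun p : G × X => (p.1 * g⁻¹, g • p.2)) '' A ∈ U l) ∧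
      (∀ l, ∀ A ∈ U l, ∀ B ∈ U l, A ≠ B → A ∩ B = ∅) ∧
      (∀ l, ∀ A ∈ U l, ∀ g : G, g ≠ 1 →
        A ∩ ((fun p : G × X => (p.1 * g⁻¹, g • p.2)) '' A) = ∅) ∧
      (∀ (h : G) (x : X), ∃ l, ∃ A ∈ U l, ∀ b ∈ M, ((b * h, x) : G × X) ∈ A) := by
  intro M
  have hd : (0:ℝ) < (d:ℝ) + 1 := by positivity
  set κ : ℝ := ((d:ℝ) + 1)⁻¹ with hκdef
  have hκpos : 0 < κ := by positivity
  obtain ⟨μ, hfin, hrange, hsum, horth, hequi⟩ := hyp (κ/4) (by positivity) M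
  set c : ℝ := κ/2 with hcdef
  have hcpos : 0 < c := by positivity
  -- pigeonhole: at every point some μ l g is at least κ
  have key : ∀ y : X, ∃ l g, κ ≤ μ l g y := by
    intro y
    by_contra hcon
    push_neg at hcon
    have hS : ∀ l : Fin (d+1), (∑ᶠ g : G, μ l g y) < κ := by
      intro l
      by_cases h0 : ∃ g₀, μ l g₀ y ≠ 0
      · obtain ⟨g₀, hg₀⟩ := h0
        have heq : (∑ᶠ g : G, μ l g y) = μ l g₀ y := by
          apply finsum_eq_single
          intro g hg
          rcases mul_eq_zero.mp (horth l g g₀ hg y) with h | h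
          · exact h
          · exact absurd h hg₀
        rw [heq]; exact hcon l g₀
      · push_neg at h0
        have heq : (∑ᶠ g : G, μ l g y) = 0 := by
          simp only [h0, finsum_zero]
        rw [heq]; exact hκpos
    have h1 := hsum y
    have hlt : (1:ℝ) < 1 := by
      calc (1:ℝ) = ∑ l : Fin (d+1), ∑ᶠ g : G, μ l g y := h1.symm
        _ < ∑ _l : Fin (d+1), κ :=
            Finset.sum_lt_sum_of_nonempty (by simp) (fun l _ => hS l)
        _ = ((d:ℝ)+1) * κ := by
            rw [Finset.sum_const, Finset.card_univ, Fintype.card_fin, nsmul_eq_mul]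
            push_cast
            ring
        _ = 1 := by
            rw [hκdef, mul_inv_cancel₀ hd.ne']
    exact lt_irrefl _ hlt
  -- the basic sets
  set B : Fin (d+1) → G → Set (G × X) :=
    fun l k => {p : G × X | c < μ l (p.1 * k) (p.1 • p.2)} with hBdef
  -- image formula
  have himg : ∀ (l : Fin (d+1)) (k g : G),
      (fun p : G × X => (p.1 * g⁻¹, g • p.2)) '' B l k = B l (g * k) := by
    intro l k g
    ext q
    constructor
    · rintro ⟨p, hp, rfl⟩
      have e1 : p.1 * g⁻¹ * (g * k) = p.1 * k := by group
      have e2 : (p.1 * g⁻¹) • (g • p.2) = p.1 • p.2 := by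
        rw [smul_smul, inv_mul_cancel_right]
      show c < μ l (p.1 * g⁻¹ * (g * k)) ((p.1 * g⁻¹) • (g • p.2))
      rw [e1, e2]; exact hp
    · intro hq
      refine ⟨(q.1 * g, g⁻¹ • q.2), ?_, ?_⟩
      · show c < μ l (q.1 * g * k) ((q.1 * g) • (g⁻¹ • q.2))
        have e1 : q.1 * g * k = q.1 * (g * k) := by group
        have e2 : (q.1 * g) • (g⁻¹ • q.2) = q.1 • q.2 := by
          rw [smul_smul, mul_inv_cancel_right]
        rw [e1, e2]; exact hq
      · show (q.1 * g * g⁻¹, g • g⁻¹ • q.2) = q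
        rw [mul_inv_cancel_right, smul_inv_smul]
  refine ⟨fun l => Set.range (B l), ?_, ?_, ?_, ?_, ?_, ?_⟩
  · -- openness
    rintro l A ⟨k, rfl⟩
    have hrep : B l k = ⋃ g : G, ({g} : Set G) ×ˢ {x : X | c < μ l (g * k) (g • x)} := by
      ext ⟨a, x⟩
      simp only [Set.mem_iUnion, Set.mem_prod, Set.mem_singleton_iff, Set.mem_setOf_eq]
      constructor
      · intro hx; exact ⟨a, rfl, hx⟩
      · rintro ⟨g, rfl, hx⟩; exact hx
    rw [hrep]
    exact isOpen_iUnion fun g =>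
      (isOpen_discrete _).prod
        (isOpen_lt continuous_const ((μ l (g * k)).continuous.comp (hcont g)))
  · -- covering
    apply Set.eq_univ_iff_forall.mpr
    intro p
    obtain ⟨l, g, hg⟩ := key (p.1 • p.2)
    refine Set.mem_iUnion.mpr ⟨l, Set.mem_sUnion.mpr ⟨B l (p.1⁻¹ * g), ⟨p.1⁻¹ * g, rfl⟩, ?_⟩⟩
    show c < μ l (p.1 * (p.1⁻¹ * g)) (p.1 • p.2)
    rw [mul_inv_cancel_left]
    calc c < κ := by rw [hcdef]; linarith
      _ ≤ μ l g (p.1 • p.2) := hg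
  · -- invariance
    rintro l A ⟨k, rfl⟩ g
    exact ⟨g * k, (himg l k g).symm⟩
  · -- disjointness
    rintro l A ⟨k, rfl⟩ A' ⟨k', rfl⟩ hne
    apply Set.eq_empty_iff_forall_notMem.mpr
    rintro p ⟨h1, h2⟩
    have h1' : c < μ l (p.1 * k) (p.1 • p.2) := h1
    have h2' : c < μ l (p.1 * k') (p.1 • p.2) := h2
    have hkk : p.1 * k = p.1 * k' := by
      by_contra hne2
      have h0 := horth l (p.1 * k) (p.1 * k') hne2 (p.1 • p.2)
      nlinarith
    exact hne (by rw [mul_left_cancel hkk])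
  · -- freeness
    rintro l A ⟨k, rfl⟩ g hg
    apply Set.eq_empty_iff_forall_notMem.mpr
    rintro p ⟨h1, h2⟩
    rw [himg l k g] at h2
    have h1' : c < μ l (p.1 * k) (p.1 • p.2) := h1
    have h2' : c < μ l (p.1 * (g * k)) (p.1 • p.2) := h2
    have hkk : p.1 * k = p.1 * (g * k) := by
      by_contra hne2
      have h0 := horth l (p.1 * k) (p.1 * (g * k)) hne2 (p.1 • p.2)
      nlinarith
    have : k = g * k := mul_left_cancel hkk
    exact hg (mul_eq_right.mp this.symm)
  · -- M-translates contained in a member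
    intro h x
    obtain ⟨l, g, hg⟩ := key (h • x)
    refine ⟨l, B l (h⁻¹ * g), ⟨h⁻¹ * g, rfl⟩, ?_⟩
    intro b hb
    show c < μ l (b * h * (h⁻¹ * g)) ((b * h) • x)
    have e1 : b * h * (h⁻¹ * g) = b * g := by group
    have e2 : (b * h) • x = b • (h • x) := by rw [mul_smul]
    rw [e1, e2]
    have hq := hequi l b hb g (b • (h • x))
    rw [inv_smul_smul] at hq
    have := abs_le.mp hq
    rw [hcdef]
    linarith [this.1, this.2]
end
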